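/- arXiv:math/0702495 — 4 statements merged into one kernel-verified Lean document; each statement's English description precedes it below -/
import Mathlib

section
/- An element f of PLF(ℝ) is reversible in PLF(ℝ) (i.e., there exists h ∈ PLF(ℝ) with h ∘ f ∘ h⁻¹ = f⁻¹) if and only if f is strongly reversible in PLF(ℝ) (i.e., there exists an involution σ ∈ PLF(ℝ) with σ ∘ f ∘ σ = f⁻¹). -/
/-- `f` is a homeomorphism of `ℝ`: a bijection of `ℝ` that is continuous in both directions. -/
def IsHomeo (f : Equiv.Perm ℝ) : Prop := Continuous f ∧ Continuous f.symm

/-- `f` is locally affine at `x`: it agrees with an affine map on a neighbourhood of `x`. -/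
def IsLocallyAffineAt (f : ℝ → ℝ) (x : ℝ) : Prop :=
  ∃ a b : ℝ, ∀ᶠ y in nhds x, f y = a * y + b

/-- Membership in PLF(ℝ): a homeomorphism of `ℝ` that is locally affine at all but
finitely many points. -/
def InPLF (f : Equiv.Perm ℝ) : Prop :=
  IsHomeo f ∧ {x : ℝ | ¬ IsLocallyAffineAt (⇑f) x}.Finite

/-- Membership in PL(ℝ): a homeomorphism of `ℝ` whose set of points of non-local-affinity
has no accumulation point in `ℝ`. -/
def InPL (f : Equiv.Perm ℝ) : Prop :=
  IsHomeo f ∧ ∀ x : ℝ, ¬ AccPt x (Filter.principal {y : ℝ | ¬ IsLocallyAffineAt (⇑f) y})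

open Set

lemma affine_coeff_eq {a b a' b' y₁ y₂ : ℝ} (hy : y₁ ≠ y₂)
    (h₁ : a * y₁ + b = a' * y₁ + b') (h₂ : a * y₂ + b = a' * y₂ + b') :
    a = a' ∧ b = b' := by
  have ha : a = a' := by
    have : (a - a') * (y₁ - y₂) = 0 := by ring_nf; linarith
    rcases mul_eq_zero.1 this with h | h
    · linarith
    · exact absurd (by linarith) hy
  exact ⟨ha, by rw [ha] at h₁; linarith⟩

lemma locAff_congr {f g : ℝ → ℝ} {x : ℝ} (h : ∀ᶠ y in nhds x, f y = g y)
    (hg : IsLocallyAffineAt g x) : IsLocallyAffineAt f x := by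
  obtain ⟨a, b, hab⟩ := hg
  exact ⟨a, b, h.mp (hab.mono fun y h1 h2 => h2.trans h1)⟩

/-- two distinct points in every eventual nbhd set -/
lemma eventually_two_points {P : ℝ → Prop} {x : ℝ} (h : ∀ᶠ y in nhds x, P y) :
    ∃ y₁ y₂, y₁ ≠ y₂ ∧ P y₁ ∧ P y₂ := by
  rcases Metric.eventually_nhds_iff.1 h with ⟨ε, hε, hb⟩
  refine ⟨x, x + ε / 2, by intro hc; nlinarith, hb (by simp [hε]), hb ?_⟩
  simp only [Real.dist_eq, add_sub_cancel_left, abs_of_pos (by linarith : (0:ℝ) < ε/2)]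
  linarith

lemma glueAffine {S : Set ℝ} (hS : IsOpen S) (hSc : IsPreconnected S) {c : ℝ → ℝ}
    (h : ∀ x ∈ S, IsLocallyAffineAt c x) {z : ℝ} (hz : z ∈ S) :
    ∃ A B : ℝ, ∀ x ∈ S, c x = A * x + B := by
  obtain ⟨A, B, hAB⟩ := h z hz
  set O₁ : Set ℝ := {x | ∀ᶠ y in nhds x, c y = A * y + B} with hO₁
  set O₂ : Set ℝ := {x | ∃ A' B' : ℝ, ¬(A' = A ∧ B' = B) ∧ ∀ᶠ y in nhds x, c y = A' * y + B'}
    with hO₂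
  have hO₁o : IsOpen O₁ := isOpen_setOf_eventually_nhds
  have hO₂o : IsOpen O₂ := by
    rw [isOpen_iff_mem_nhds]
    rintro x ⟨A', B', hne, hev⟩
    filter_upwards [hev.eventually_nhds] with y hy
    exact ⟨A', B', hne, hy⟩
  have hdisj : Disjoint O₁ O₂ := by
    rw [Set.disjoint_left]
    rintro x hx1 ⟨A', B', hne, hev⟩
    obtain ⟨y₁, y₂, hy, ⟨e1, e1'⟩, ⟨e2, e2'⟩⟩ := eventually_two_points (hx1.and hev)
    obtain ⟨ha, hb⟩ := affine_coeff_eq hy (e1'.symm.trans e1) (e2'.symm.trans e2)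
    exact hne ⟨ha, hb⟩
  have hcover : S ⊆ O₁ ∪ O₂ := by
    intro x hx
    obtain ⟨A', B', hev⟩ := h x hx
    by_cases he : A' = A ∧ B' = B
    · left; rw [he.1, he.2] at hev; exact hev
    · right; exact ⟨A', B', he, hev⟩
  rcases hSc.subset_or_subset hO₁o hO₂o hdisj hcover with hsub | hsub
  · exact ⟨A, B, fun x hx => ((hsub hx).self_of_nhds)⟩
  · exact absurd (hsub hz) (Set.disjoint_left.1 hdisj hAB)

lemma locAff_slope_ne_zero {f : ℝ → ℝ} (hinj : Function.Injective f) {x a b : ℝ}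
    (hev : ∀ᶠ y in nhds x, f y = a * y + b) : a ≠ 0 := by
  intro ha
  subst ha
  rcases Metric.eventually_nhds_iff.1 hev with ⟨ε, hε, hb⟩
  have h1 : f x = 0 * x + b := hb (by simp [hε])
  have h2 : f (x + ε / 2) = 0 * (x + ε / 2) + b := hb (by
    simp only [Real.dist_eq, add_sub_cancel_left, abs_of_pos (by linarith : (0:ℝ) < ε/2)]
    linarith)
  have heq : f x = f (x + ε / 2) := by rw [h1, h2]; ring
  have := hinj heq
  linarith

lemma locAff_comp {f g : ℝ → ℝ} {x : ℝ} (hfc : ContinuousAt f x)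
    (hf : IsLocallyAffineAt f x) (hg : IsLocallyAffineAt g (f x)) :
    IsLocallyAffineAt (fun y => g (f y)) x := by
  obtain ⟨a, b, hab⟩ := hf
  obtain ⟨A, B, hAB⟩ := hg
  refine ⟨A * a, A * b + B, ?_⟩
  filter_upwards [hab, hfc.eventually hAB] with y h1 h2
  rw [h2, h1]; ring

lemma locAff_symm (f : Equiv.Perm ℝ) (hc : Continuous f.symm) {x : ℝ}
    (hx : IsLocallyAffineAt (⇑f) x) : IsLocallyAffineAt (⇑f.symm) (f x) := by
  obtain ⟨a, b, hab⟩ := hx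
  have ha : a ≠ 0 := locAff_slope_ne_zero f.injective hab
  refine ⟨a⁻¹, -b / a, ?_⟩
  have tend : Filter.Tendsto (⇑f.symm) (nhds (f x)) (nhds x) := by
    have := hc.continuousAt (x := f x)
    simp only [ContinuousAt, Equiv.symm_apply_apply] at this
    exact this
  filter_upwards [tend.eventually hab] with y hy
  rw [Equiv.apply_symm_apply] at hy
  field_simp
  linarith

lemma InPLF_one : InPLF 1 := by
  refine ⟨⟨?_, ?_⟩, ?_⟩
  · simpa using continuous_id
  · exact continuous_id
  · have hall : ∀ x : ℝ, IsLocallyAffineAt (⇑(1 : Equiv.Perm ℝ)) x :=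
      fun x => ⟨1, 0, Filter.Eventually.of_forall (by simp)⟩
    refine Set.Finite.subset Set.finite_empty ?_
    intro x hx
    exact absurd (hall x) hx

lemma InPLF.inv {f : Equiv.Perm ℝ} (hf : InPLF f) : InPLF f⁻¹ := by
  refine ⟨⟨hf.1.2, hf.1.1⟩, ?_⟩
  refine Set.Finite.subset (hf.2.image ⇑f) ?_
  intro x hx
  simp only [Set.mem_setOf_eq] at hx
  by_contra hmem
  simp only [Set.mem_image, Set.mem_setOf_eq, not_exists, not_and] at hmem
  have h1 : IsLocallyAffineAt (⇑f) (f.symm x) := by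
    by_contra h2
    exact hmem (f.symm x) h2 (f.apply_symm_apply x)
  have := locAff_symm f hf.1.2 h1
  rw [f.apply_symm_apply] at this
  exact hx this

lemma InPLF.mul {f g : Equiv.Perm ℝ} (hf : InPLF f) (hg : InPLF g) : InPLF (f * g) := by
  refine ⟨⟨?_, ?_⟩, ?_⟩
  · exact hf.1.1.comp hg.1.1
  · exact hg.1.2.comp hf.1.2
  · refine Set.Finite.subset (hg.2.union (hf.2.image ⇑g.symm)) ?_
    intro x hx
    simp only [Set.mem_setOf_eq] at hx
    by_cases h1 : IsLocallyAffineAt (⇑g) x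
    · right
      refine ⟨g x, ?_, g.symm_apply_apply x⟩
      simp only [Set.mem_setOf_eq]
      intro h2
      exact hx (locAff_comp (f := ⇑g) (g := ⇑f) (hg.1.1.continuousAt) h1 h2)
    · left; exact h1

lemma perm_symm_strictMono {f : Equiv.Perm ℝ} (hm : StrictMono ⇑f) : StrictMono ⇑f.symm := by
  intro a b hab
  rcases lt_trichotomy (f.symm a) (f.symm b) with h | h | h
  · exact h
  · exact absurd (by rw [← f.apply_symm_apply a, ← f.apply_symm_apply b, h]) hab.ne
  · have := hm h
    rw [f.apply_symm_apply, f.apply_symm_apply] at this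
    exact absurd hab (not_lt.2 this.le)

lemma perm_symm_strictAnti {f : Equiv.Perm ℝ} (hm : StrictAnti ⇑f) : StrictAnti ⇑f.symm := by
  intro a b hab
  rcases lt_trichotomy (f.symm b) (f.symm a) with h | h | h
  · exact h
  · exact absurd (by rw [← f.apply_symm_apply a, ← f.apply_symm_apply b, h]) hab.ne'
  · have := hm h
    rw [f.apply_symm_apply, f.apply_symm_apply] at this
    exact absurd hab (not_lt.2 this.le)

lemma exists_breakpoint {c : ℝ → ℝ} (hcc : Continuous c) {a b : ℝ} (hab : a < b)
    (hca : c a = a) (hcb : c b = b) {x : ℝ} (hx : x ∈ Set.Ioo a b) (hcx : c x ≠ x) :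
    ∃ t, t ∈ Set.Ioo a b ∧ ¬ IsLocallyAffineAt c t := by
  by_contra hno
  push_neg at hno
  obtain ⟨A, B, hAB⟩ := glueAffine isOpen_Ioo isPreconnected_Ioo hno hx
  have hlim : ∀ e ∈ Set.Icc a b, c e = A * e + B := by
    intro e he
    haveI hne : (nhdsWithin e (Set.Ioo a b)).NeBot := by
      rw [← mem_closure_iff_nhdsWithin_neBot, closure_Ioo hab.ne]
      exact he
    have h1 : Filter.Tendsto c (nhdsWithin e (Set.Ioo a b)) (nhds (c e)) :=
      (hcc.continuousAt).continuousWithinAt.tendsto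
    have h2 : Filter.Tendsto (fun y => A * y + B) (nhdsWithin e (Set.Ioo a b))
        (nhds (A * e + B)) := by
      exact ((continuous_const.mul continuous_id).add continuous_const).continuousWithinAt.tendsto
    have h1' : Filter.Tendsto (fun y => A * y + B) (nhdsWithin e (Set.Ioo a b)) (nhds (c e)) := by
      refine h1.congr' ?_
      filter_upwards [self_mem_nhdsWithin] with y hy
      exact hAB y hy
    exact tendsto_nhds_unique h1' h2
  have ha' : A * a + B = a := by rw [← hlim a ⟨le_refl a, hab.le⟩, hca]
  have hb' : A * b + B = b := by rw [← hlim b ⟨hab.le, le_refl b⟩, hcb]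
  obtain ⟨hA, hB⟩ := affine_coeff_eq hab.ne (a' := 1) (b' := 0)
    (by rw [ha']; ring) (by rw [hb']; ring)
  have := hAB x hx
  rw [hA, hB] at this
  simp at this
  exact hcx (by linarith [this])

lemma engine_window (g : Equiv.Perm ℝ) (hgm : StrictMono ⇑g)
    (c : ℝ → ℝ) (hcc : Continuous c) (hBc : {x : ℝ | ¬ IsLocallyAffineAt c x}.Finite)
    (comm : ∀ x, c (g x) = g (c x))
    (u v p : ℝ) (hup : u < p) (hpv : p < v) (hgu : g u = u) (hgv : g v = v)
    (hgid : ∀ x ∈ Set.Ioo u v, x < g x)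
    (hcu : c u = u) (hcv : c v = v) (hcp : c p = p) :
    ∀ x ∈ Set.Ioo u v, c x = x := by
  by_contra hcon
  push_neg at hcon
  obtain ⟨x₀, hx₀, hcx₀⟩ := hcon
  set K : Set ℝ := Set.Icc u v ∩ {x | c x = x} with hK
  have hKc : IsClosed K := isClosed_Icc.inter (isClosed_eq hcc continuous_id)
  have huv : u < v := hup.trans hpv
  have huK : u ∈ K := ⟨⟨le_refl u, huv.le⟩, hcu⟩
  have hvK : v ∈ K := ⟨⟨huv.le, le_refl v⟩, hcv⟩
  have hpK : p ∈ K := ⟨⟨hup.le, hpv.le⟩, hcp⟩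
  have gK : ∀ x, x ∈ K ↔ g x ∈ K := by
    intro x
    have hmc : c x = x ↔ c (g x) = g x := by
      rw [comm]
      exact ⟨fun h => by rw [h], fun h => g.injective h⟩
    have hIcc : x ∈ Set.Icc u v ↔ g x ∈ Set.Icc u v := by
      constructor
      · rintro ⟨h1, h2⟩
        exact ⟨hgu ▸ hgm.monotone h1, hgv ▸ hgm.monotone h2⟩
      · rintro ⟨h1, h2⟩
        rw [← hgu] at h1; rw [← hgv] at h2
        exact ⟨hgm.le_iff_le.1 h1, hgm.le_iff_le.1 h2⟩
    exact and_congr hIcc hmc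
  -- sup/inf around x₀
  have hA0ne : (K ∩ Set.Iic x₀).Nonempty := ⟨u, huK, hx₀.1.le⟩
  have hA0bdd : BddAbove (K ∩ Set.Iic x₀) := ⟨x₀, fun y hy => hy.2⟩
  have hB0ne : (K ∩ Set.Ici x₀).Nonempty := ⟨v, hvK, hx₀.2.le⟩
  have hB0bdd : BddBelow (K ∩ Set.Ici x₀) := ⟨x₀, fun y hy => hy.2⟩
  set α := sSup (K ∩ Set.Iic x₀) with hα
  set β := sInf (K ∩ Set.Ici x₀) with hβ
  have hαmem : α ∈ K ∩ Set.Iic x₀ :=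
    (hKc.inter isClosed_Iic).csSup_mem hA0ne hA0bdd
  have hβmem : β ∈ K ∩ Set.Ici x₀ :=
    (hKc.inter isClosed_Ici).csInf_mem hB0ne hB0bdd
  have hαx : α < x₀ := lt_of_le_of_ne hαmem.2 (fun h => hcx₀ (h ▸ hαmem.1.2))
  have hxβ : x₀ < β := lt_of_le_of_ne (hβmem.2) (fun h => hcx₀ (h.symm ▸ hβmem.1.2))
  have hsep : ∀ y ∈ K, y ≤ α ∨ β ≤ y := by
    intro y hy
    rcases le_total y x₀ with h | h
    · exact Or.inl (le_csSup hA0bdd ⟨hy, h⟩)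
    · exact Or.inr (csInf_le hB0bdd ⟨hy, h⟩)
  -- sequences
  set xs : ℕ → ℝ := fun n => (⇑g)^[n] x₀ with hxs
  set as : ℕ → ℝ := fun n => (⇑g)^[n] α with has
  set bs : ℕ → ℝ := fun n => (⇑g)^[n] β with hbs
  have hxs_succ : ∀ n, xs (n + 1) = g (xs n) := fun n => Function.iterate_succ_apply' _ n x₀
  have has_succ : ∀ n, as (n + 1) = g (as n) := fun n => Function.iterate_succ_apply' _ n α
  have hbs_succ : ∀ n, bs (n + 1) = g (bs n) := fun n => Function.iterate_succ_apply' _ n β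
  have hxsne : ∀ n, c (xs n) ≠ xs n := by
    intro n
    induction n with
    | zero => exact hcx₀
    | succ n ih =>
      rw [hxs_succ, comm]
      exact fun h => ih (g.injective h)
  have hasK : ∀ n, as n ∈ K := by
    intro n
    induction n with
    | zero => exact hαmem.1
    | succ n ih => rw [has_succ]; exact (gK _).1 ih
  have hbsK : ∀ n, bs n ∈ K := by
    intro n
    induction n with
    | zero => exact hβmem.1
    | succ n ih => rw [hbs_succ]; exact (gK _).1 ih
  have horder : ∀ n, as n < xs n ∧ xs n < bs n := by
    intro n
    induction n with
    | zero => exact ⟨hαx, hxβ⟩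
    | succ n ih =>
      rw [has_succ, hbs_succ, hxs_succ]
      exact ⟨hgm ih.1, hgm ih.2⟩
  have hsepn : ∀ n, ∀ y ∈ K, y ≤ as n ∨ bs n ≤ y := by
    intro n
    induction n with
    | zero => exact hsep
    | succ n ih =>
      intro y hy
      have hy' : g.symm y ∈ K := by
        have := (gK (g.symm y))
        rw [g.apply_symm_apply] at this
        exact this.2 hy
      rcases ih (g.symm y) hy' with h | h
      · left
        rw [has_succ]
        have := hgm.monotone h
        rwa [g.apply_symm_apply] at this
      · right
        rw [hbs_succ]
        have := hgm.monotone h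
        rwa [g.apply_symm_apply] at this
  have hxIoo : ∀ n, xs n ∈ Set.Ioo u v := by
    intro n
    exact ⟨lt_of_le_of_lt (hasK n).1.1 (horder n).1, lt_of_lt_of_le (horder n).2 (hbsK n).1.2⟩
  by_cases hcase : u < α
  · -- case A : strict progress forever
    have hau : ∀ n, u < as n := by
      intro n
      induction n with
      | zero => exact hcase
      | succ n ih => rw [has_succ, ← hgu]; exact hgm ih
    have haIoo : ∀ n, as n ∈ Set.Ioo u v := by
      intro n
      exact ⟨hau n, lt_of_lt_of_le (lt_trans (horder n).1 (horder n).2) (hbsK n).1.2⟩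
    have hprog : ∀ n, bs n ≤ as (n + 1) := by
      intro n
      have h1 : as n < g (as n) := hgid _ (haIoo n)
      have h2 : g (as n) ∈ K := by rw [← has_succ]; exact hasK (n + 1)
      rcases hsepn n _ h2 with h | h
      · exact absurd h (not_le.2 h1)
      · rw [has_succ]; exact h
    have hchain : ∀ m n, m < n → bs m ≤ as n := by
      intro m n hmn
      induction n with
      | zero => omega
      | succ n ih =>
        rcases Nat.lt_succ_iff_lt_or_eq.1 hmn with h | h
        · have h1 := ih h
          have h2 : as n < bs n := lt_trans (horder n).1 (horder n).2
          exact le_trans h1 (le_trans h2.le (hprog n))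
        · subst h; exact hprog m
    have hbp : ∀ n, ∃ t, t ∈ Set.Ioo (as n) (bs n) ∧ ¬ IsLocallyAffineAt c t := by
      intro n
      exact exists_breakpoint hcc (lt_trans (horder n).1 (horder n).2)
        (hasK n).2 (hbsK n).2 ⟨(horder n).1, (horder n).2⟩ (hxsne n)
    choose t ht1 ht2 using hbp
    have hinj : Function.Injective t := by
      intro m n hmn
      by_contra hne
      rcases Nat.lt_or_ge m n with h | h
      · have := hchain m n h
        have h1 := (ht1 m).2
        have h2 := (ht1 n).1
        rw [hmn] at h1
        linarith
      · have h' : n < m := lt_of_le_of_ne h (Ne.symm hne)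
        have := hchain n m h'
        have h1 := (ht1 n).2
        have h2 := (ht1 m).1
        rw [hmn] at h2
        linarith
    exact Set.infinite_of_injective_forall_mem hinj (fun n => ht2 n) hBc
  · -- case B : α = u
    have hαu : α = u := le_antisymm (not_lt.1 hcase) hαmem.1.1.1
    rcases lt_or_eq_of_le hβmem.1.1.2 with hβv | hβv
    · have hβIoo : β ∈ Set.Ioo u v := ⟨lt_trans hx₀.1 hxβ, hβv⟩
      have h1 : β < g β := hgid β hβIoo
      rcases hsepn 1 β hβmem.1 with h | h
      · have he : as 1 = u := by
          simp only [has]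
          rw [Function.iterate_one, hαu, hgu]
        rw [he] at h
        exact absurd h (not_le.2 hβIoo.1)
      · have he : bs 1 = g β := by
          simp only [hbs]
          rw [Function.iterate_one]
        rw [he] at h
        exact absurd h (not_le.2 h1)
    · rcases hsep p hpK with h | h
      · rw [hαu] at h; exact absurd h (not_le.2 hup)
      · rw [hβv] at h; exact absurd h (not_le.2 hpv)

lemma engine_global (g : Equiv.Perm ℝ) (hgm : StrictMono ⇑g)
    (c : ℝ → ℝ) (hcc : Continuous c) (hBc : {x : ℝ | ¬ IsLocallyAffineAt c x}.Finite)
    (comm : ∀ x, c (g x) = g (c x))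
    (p : ℝ) (hcp : c p = p) (hgid : ∀ x : ℝ, x < g x) :
    ∀ x, c x = x := by
  by_contra hcon
  push_neg at hcon
  obtain ⟨x₀, hcx₀⟩ := hcon
  set K : Set ℝ := {x | c x = x} with hK
  have hKc : IsClosed K := isClosed_eq hcc continuous_id
  have hpK : p ∈ K := hcp
  have gK : ∀ x, x ∈ K ↔ g x ∈ K := by
    intro x
    simp only [hK, Set.mem_setOf_eq, comm]
    exact ⟨fun h => by rw [h], fun h => g.injective h⟩
  have hA0ne : (K ∩ Set.Iic x₀).Nonempty := by
    by_contra hno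
    rw [Set.not_nonempty_iff_eq_empty] at hno
    have hbdd : BddBelow K := by
      refine ⟨x₀, fun y hy => ?_⟩
      by_contra hlt
      exact absurd (show y ∈ K ∩ Set.Iic x₀ from ⟨hy, le_of_not_ge hlt⟩)
        (by rw [hno]; exact Set.notMem_empty y)
    have hmK : sInf K ∈ K := hKc.csInf_mem ⟨p, hpK⟩ hbdd
    have h1 : g.symm (sInf K) ∈ K := by
      have := (gK (g.symm (sInf K)))
      rw [g.apply_symm_apply] at this
      exact this.2 hmK
    have h2 : g.symm (sInf K) < sInf K := by
      have := hgid (g.symm (sInf K))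
      rwa [g.apply_symm_apply] at this
    exact absurd (csInf_le hbdd h1) (not_le.2 h2)
  have hB0ne : (K ∩ Set.Ici x₀).Nonempty := by
    by_contra hno
    rw [Set.not_nonempty_iff_eq_empty] at hno
    have hbdd : BddAbove K := by
      refine ⟨x₀, fun y hy => ?_⟩
      by_contra hlt
      exact absurd (show y ∈ K ∩ Set.Ici x₀ from ⟨hy, le_of_not_ge hlt⟩)
        (by rw [hno]; exact Set.notMem_empty y)
    have hmK : sSup K ∈ K := hKc.csSup_mem ⟨p, hpK⟩ hbdd
    have h1 : g (sSup K) ∈ K := (gK _).1 hmK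
    exact absurd (le_csSup hbdd h1) (not_le.2 (hgid (sSup K)))
  have hA0bdd : BddAbove (K ∩ Set.Iic x₀) := ⟨x₀, fun y hy => hy.2⟩
  have hB0bdd : BddBelow (K ∩ Set.Ici x₀) := ⟨x₀, fun y hy => hy.2⟩
  set α := sSup (K ∩ Set.Iic x₀) with hα
  set β := sInf (K ∩ Set.Ici x₀) with hβ
  have hαmem : α ∈ K ∩ Set.Iic x₀ := (hKc.inter isClosed_Iic).csSup_mem hA0ne hA0bdd
  have hβmem : β ∈ K ∩ Set.Ici x₀ := (hKc.inter isClosed_Ici).csInf_mem hB0ne hB0bdd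
  have hαx : α < x₀ := lt_of_le_of_ne hαmem.2 (fun h => hcx₀ (h ▸ hαmem.1))
  have hxβ : x₀ < β := lt_of_le_of_ne (hβmem.2) (fun h => hcx₀ (h.symm ▸ hβmem.1))
  have hsep : ∀ y ∈ K, y ≤ α ∨ β ≤ y := by
    intro y hy
    rcases le_total y x₀ with h | h
    · exact Or.inl (le_csSup hA0bdd ⟨hy, h⟩)
    · exact Or.inr (csInf_le hB0bdd ⟨hy, h⟩)
  set xs : ℕ → ℝ := fun n => (⇑g)^[n] x₀ with hxs
  set as : ℕ → ℝ := fun n => (⇑g)^[n] α with has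
  set bs : ℕ → ℝ := fun n => (⇑g)^[n] β with hbs
  have hxs_succ : ∀ n, xs (n + 1) = g (xs n) := fun n => Function.iterate_succ_apply' _ n x₀
  have has_succ : ∀ n, as (n + 1) = g (as n) := fun n => Function.iterate_succ_apply' _ n α
  have hbs_succ : ∀ n, bs (n + 1) = g (bs n) := fun n => Function.iterate_succ_apply' _ n β
  have hxsne : ∀ n, c (xs n) ≠ xs n := by
    intro n
    induction n with
    | zero => exact hcx₀
    | succ n ih =>
      rw [hxs_succ, comm]
      exact fun h => ih (g.injective h)
  have hasK : ∀ n, as n ∈ K := by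
    intro n
    induction n with
    | zero => exact hαmem.1
    | succ n ih => rw [has_succ]; exact (gK _).1 ih
  have hbsK : ∀ n, bs n ∈ K := by
    intro n
    induction n with
    | zero => exact hβmem.1
    | succ n ih => rw [hbs_succ]; exact (gK _).1 ih
  have horder : ∀ n, as n < xs n ∧ xs n < bs n := by
    intro n
    induction n with
    | zero => exact ⟨hαx, hxβ⟩
    | succ n ih =>
      rw [has_succ, hbs_succ, hxs_succ]
      exact ⟨hgm ih.1, hgm ih.2⟩
  have hsepn : ∀ n, ∀ y ∈ K, y ≤ as n ∨ bs n ≤ y := by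
    intro n
    induction n with
    | zero => exact hsep
    | succ n ih =>
      intro y hy
      have hy' : g.symm y ∈ K := by
        have := (gK (g.symm y))
        rw [g.apply_symm_apply] at this
        exact this.2 hy
      rcases ih (g.symm y) hy' with h | h
      · left
        rw [has_succ]
        have := hgm.monotone h
        rwa [g.apply_symm_apply] at this
      · right
        rw [hbs_succ]
        have := hgm.monotone h
        rwa [g.apply_symm_apply] at this
  have hprog : ∀ n, bs n ≤ as (n + 1) := by
    intro n
    have h1 : as n < g (as n) := hgid _
    have h2 : g (as n) ∈ K := by rw [← has_succ]; exact hasK (n + 1)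
    rcases hsepn n _ h2 with h | h
    · exact absurd h (not_le.2 h1)
    · rw [has_succ]; exact h
  have hchain : ∀ m n, m < n → bs m ≤ as n := by
    intro m n hmn
    induction n with
    | zero => omega
    | succ n ih =>
      rcases Nat.lt_succ_iff_lt_or_eq.1 hmn with h | h
      · have h1 := ih h
        have h2 : as n < bs n := lt_trans (horder n).1 (horder n).2
        exact le_trans h1 (le_trans h2.le (hprog n))
      · subst h; exact hprog m
  have hbp : ∀ n, ∃ t, t ∈ Set.Ioo (as n) (bs n) ∧ ¬ IsLocallyAffineAt c t := by
    intro n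
    exact exists_breakpoint hcc (lt_trans (horder n).1 (horder n).2)
      (hasK n) (hbsK n) ⟨(horder n).1, (horder n).2⟩ (hxsne n)
  choose t ht1 ht2 using hbp
  have hinj : Function.Injective t := by
    intro m n hmn
    by_contra hne
    rcases Nat.lt_or_ge m n with h | h
    · have := hchain m n h
      have h1 := (ht1 m).2
      have h2 := (ht1 n).1
      rw [hmn] at h1
      linarith
    · have h' : n < m := lt_of_le_of_ne h (Ne.symm hne)
      have := hchain n m h'
      have h1 := (ht1 n).2
      have h2 := (ht1 m).1
      rw [hmn] at h2
      linarith
  exact Set.infinite_of_injective_forall_mem hinj (fun n => ht2 n) hBc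

lemma affine_atTop {e : ℝ → ℝ} (hB : {x : ℝ | ¬ IsLocallyAffineAt e x}.Finite) :
    ∃ R a b, ∀ x, R < x → e x = a * x + b := by
  obtain ⟨R₀, hR₀⟩ := hB.bddAbove
  have hall : ∀ x ∈ Set.Ioi R₀, IsLocallyAffineAt e x := by
    intro x hx
    by_contra hbad
    exact absurd (hR₀ hbad) (not_le.2 hx)
  obtain ⟨a, b, hab⟩ := glueAffine isOpen_Ioi isPreconnected_Ioi hall
    (show R₀ + 1 ∈ Set.Ioi R₀ by simp)
  exact ⟨R₀, a, b, fun x hx => hab x hx⟩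

lemma slope_pos_of_strictMono {e : ℝ → ℝ} (hm : StrictMono e) {R a b : ℝ}
    (hab : ∀ x, R < x → e x = a * x + b) : 0 < a := by
  have h1 := hab (R + 1) (by linarith)
  have h2 := hab (R + 2) (by linarith)
  have := hm (show R + 1 < R + 2 by linarith)
  rw [h1, h2] at this
  linarith

lemma ray_coeff_eq {a b a' b' M : ℝ} (h : ∀ x, M < x → a * x + b = a' * x + b') :
    a = a' ∧ b = b' :=
  affine_coeff_eq (by linarith : M + 1 ≠ M + 2)
    (h (M + 1) (by linarith)) (h (M + 2) (by linarith))

/-- If an orientation-preserving `h` reverses an orientation-preserving `f`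
(all PLF data given), then `f` is the identity near `+∞`. -/
lemma rev_id_atTop (f h : Equiv.Perm ℝ)
    (hBf : {x : ℝ | ¬ IsLocallyAffineAt (⇑f) x}.Finite)
    (hBh : {x : ℝ | ¬ IsLocallyAffineAt (⇑h) x}.Finite)
    (hfm : StrictMono ⇑f) (hhm : StrictMono ⇑h)
    (conj : ∀ x, h (f x) = f.symm (h x)) :
    ∃ R, ∀ x, R < x → f x = x := by
  obtain ⟨R₁, a, b, hfa⟩ := affine_atTop hBf
  obtain ⟨R₂, c, d, hha⟩ := affine_atTop hBh
  have ha : 0 < a := slope_pos_of_strictMono hfm hfa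
  have hc : 0 < c := slope_pos_of_strictMono hhm hha
  set M := max (max R₁ R₂) (max (f.symm R₂) (f.symm (h.symm R₁))) with hM
  have key : ∀ x, M < x → c * x + d = a * (c * (a * x + b) + d) + b := by
    intro x hx
    have hx1 : R₁ < x := lt_of_le_of_lt (le_max_left R₁ R₂ |>.trans (le_max_left _ _)) hx
    have hx2 : R₂ < x := lt_of_le_of_lt (le_max_right R₁ R₂ |>.trans (le_max_left _ _)) hx
    have hx3 : f.symm R₂ < x :=
      lt_of_le_of_lt ((le_max_left _ _).trans (le_max_right _ _)) hx
    have hx4 : f.symm (h.symm R₁) < x :=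
      lt_of_le_of_lt ((le_max_right _ _).trans (le_max_right _ _)) hx
    have hfx2 : R₂ < f x := by
      have := hfm hx3
      rwa [f.apply_symm_apply] at this
    have hhfx : R₁ < h (f x) := by
      have h5 : h.symm R₁ < f x := by
        have := hfm hx4
        rwa [f.apply_symm_apply] at this
      have := hhm h5
      rwa [h.apply_symm_apply] at this
    have e1 : f (h (f x)) = h x := by
      rw [conj x, f.apply_symm_apply]
    calc c * x + d = h x := (hha x hx2).symm
    _ = f (h (f x)) := e1.symm
    _ = a * (h (f x)) + b := hfa _ hhfx
    _ = a * (c * (f x) + d) + b := by rw [hha _ hfx2]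
    _ = a * (c * (a * x + b) + d) + b := by rw [hfa _ hx1]
  have hcoeff := ray_coeff_eq (a := c) (b := d)
    (a' := a * c * a) (b' := a * (c * b + d) + b) (M := M)
    (fun x hx => by rw [key x hx]; ring)
  have ha1 : a = 1 := by
    have h1 : c = a * c * a := hcoeff.1
    have h2 : a ^ 2 = 1 := by
      have : c * (a ^ 2 - 1) = 0 := by ring_nf; nlinarith [hcoeff.1]
      rcases mul_eq_zero.1 this with h | h
      · exact absurd h (ne_of_gt hc)
      · linarith
    have h3 : (a - 1) * (a + 1) = 0 := by ring_nf; nlinarith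
    rcases mul_eq_zero.1 h3 with hh | hh
    · linarith
    · linarith
  have hb0 : b = 0 := by
    have h2 := hcoeff.2
    rw [ha1] at h2
    have : b * (c + 1) = 0 := by linarith
    rcases mul_eq_zero.1 this with hh | hh
    · exact hh
    · linarith
  exact ⟨R₁, fun x hx => by rw [hfa x hx, ha1, hb0]; ring⟩

lemma affine_closure {c : ℝ → ℝ} (hcc : Continuous c) {a b A B : ℝ} (hab : a < b)
    (hAB : ∀ x ∈ Set.Ioo a b, c x = A * x + B) : ∀ e ∈ Set.Icc a b, c e = A * e + B := by
  intro e he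
  haveI hne : (nhdsWithin e (Set.Ioo a b)).NeBot := by
    rw [← mem_closure_iff_nhdsWithin_neBot, closure_Ioo hab.ne]
    exact he
  have h1 : Filter.Tendsto c (nhdsWithin e (Set.Ioo a b)) (nhds (c e)) :=
    (hcc.continuousAt).continuousWithinAt.tendsto
  have h2 : Filter.Tendsto (fun y => A * y + B) (nhdsWithin e (Set.Ioo a b))
      (nhds (A * e + B)) :=
    ((continuous_const.mul continuous_id).add continuous_const).continuousWithinAt.tendsto
  have h1' : Filter.Tendsto (fun y => A * y + B) (nhdsWithin e (Set.Ioo a b)) (nhds (c e)) := by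
    refine h1.congr' ?_
    filter_upwards [self_mem_nhdsWithin] with y hy
    exact hAB y hy
  exact tendsto_nhds_unique h1' h2

lemma perm_fix_symm (e : Equiv.Perm ℝ) (y : ℝ) : e y = y ↔ e.symm y = y := by
  constructor
  · intro hh
    conv_lhs => rw [← hh]
    rw [e.symm_apply_apply]
  · intro hh
    conv_lhs => rw [← hh]
    rw [e.apply_symm_apply]

lemma exists_delta_clear {T : Set ℝ} (hT : T.Finite) (s : ℝ) :
    ∃ δ, 0 < δ ∧ ∀ y ∈ T, y ∉ Set.Ioo (s - δ) s := by
  set T' := T ∩ Set.Iio s with hT'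
  by_cases hne : T'.Nonempty
  · have hT'f : T'.Finite := hT.subset Set.inter_subset_left
    have hm : sSup T' ∈ T' := hne.csSup_mem hT'f
    refine ⟨s - sSup T', by simpa using hm.2, ?_⟩
    rintro y hy ⟨h1, h2⟩
    have : y ≤ sSup T' := le_csSup hT'f.bddAbove ⟨hy, h2⟩
    linarith
  · refine ⟨1, one_pos, ?_⟩
    rintro y hy ⟨h1, h2⟩
    exact hne ⟨y, hy, h2⟩

lemma locAff_negconj {e : ℝ → ℝ} {x : ℝ} (h : IsLocallyAffineAt e (-x)) :
    IsLocallyAffineAt (fun y => -(e (-y))) x := by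
  obtain ⟨a, b, hev⟩ := h
  refine ⟨a, -b, ?_⟩
  have tend : Filter.Tendsto (fun y : ℝ => -y) (nhds x) (nhds (-x)) :=
    (continuous_neg.tendsto x)
  filter_upwards [tend.eventually hev] with y hy
  rw [hy]; ring

lemma revOP_id (f h : Equiv.Perm ℝ)
    (hBf : {x : ℝ | ¬ IsLocallyAffineAt (⇑f) x}.Finite)
    (hBh : {x : ℝ | ¬ IsLocallyAffineAt (⇑h) x}.Finite)
    (hfc : Continuous ⇑f) (hhc : Continuous ⇑h)
    (hfm : StrictMono ⇑f) (hhm : StrictMono ⇑h)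
    (conj : ∀ x, h (f x) = f.symm (h x)) : ∀ x, f x = x := by
  obtain ⟨R, hR⟩ := rev_id_atTop f h hBf hBh hfm hhm conj
  -- mirror at -∞
  set N : Equiv.Perm ℝ := Equiv.neg ℝ with hN
  set f' : Equiv.Perm ℝ := (N.trans f).trans N with hf'def
  set h' : Equiv.Perm ℝ := (N.trans h).trans N with hh'def
  have hf' : ∀ y, f' y = -(f (-y)) := fun y => by
    simp [hf'def, hN, Equiv.trans_apply]
  have hh' : ∀ y, h' y = -(h (-y)) := fun y => by
    simp [hh'def, hN, Equiv.trans_apply]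
  have hf's : ∀ y, f'.symm y = -(f.symm (-y)) := by
    intro y
    rw [Equiv.symm_apply_eq, hf']
    simp
  have hf'm : StrictMono ⇑f' := by
    intro y z hyz
    rw [hf', hf']
    have : f (-z) < f (-y) := hfm (by linarith)
    linarith
  have hh'm : StrictMono ⇑h' := by
    intro y z hyz
    rw [hh', hh']
    have : h (-z) < h (-y) := hhm (by linarith)
    linarith
  have hcoef' : ⇑f' = fun y => -(f (-y)) := funext hf'
  have hcoeh' : ⇑h' = fun y => -(h (-y)) := funext hh'
  have hBf' : {x : ℝ | ¬ IsLocallyAffineAt (⇑f') x}.Finite := by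
    rw [hcoef']
    refine Set.Finite.subset (hBf.image (fun y => -y)) ?_
    intro x hx
    simp only [Set.mem_setOf_eq] at hx
    by_contra hnot
    simp only [Set.mem_image, Set.mem_setOf_eq, not_exists, not_and] at hnot
    have hgood : IsLocallyAffineAt (⇑f) (-x) := by
      by_contra hb
      exact hnot (-x) hb (by ring)
    exact hx (locAff_negconj hgood)
  have hBh' : {x : ℝ | ¬ IsLocallyAffineAt (⇑h') x}.Finite := by
    rw [hcoeh']
    refine Set.Finite.subset (hBh.image (fun y => -y)) ?_
    intro x hx
    simp only [Set.mem_setOf_eq] at hx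
    by_contra hnot
    simp only [Set.mem_image, Set.mem_setOf_eq, not_exists, not_and] at hnot
    have hgood : IsLocallyAffineAt (⇑h) (-x) := by
      by_contra hb
      exact hnot (-x) hb (by ring)
    exact hx (locAff_negconj hgood)
  have conj' : ∀ x, h' (f' x) = f'.symm (h' x) := by
    intro x
    rw [hf', hh', hf's, hh', neg_neg, neg_neg, conj]
  obtain ⟨R', hR'⟩ := rev_id_atTop f' h' hBf' hBh' hf'm hh'm conj'
  have hIdNeg : ∀ x, x < -R' → f x = x := by
    intro x hx
    have := hR' (-x) (by linarith)
    rw [hf', neg_neg] at this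
    linarith [this]
  -- now the global argument
  by_contra hcon
  push_neg at hcon
  obtain ⟨x₀, hx₀⟩ := hcon
  set S₀ : Set ℝ := {x | f x ≠ x} with hS₀def
  have hS₀ne : S₀.Nonempty := ⟨x₀, hx₀⟩
  have hS₀open : IsOpen S₀ := isOpen_ne_fun hfc continuous_id
  have hbdd : BddAbove S₀ := by
    refine ⟨R, fun y hy => ?_⟩
    by_contra hgt
    exact hy (hR y (lt_of_not_ge hgt))
  set s := sSup S₀ with hs
  have hfs : f s = s := by
    by_contra hne
    obtain ⟨ε, hε, hball⟩ := Metric.isOpen_iff.1 hS₀open s hne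
    have : s + ε / 2 ∈ S₀ := hball (by
      simp only [Metric.mem_ball, Real.dist_eq, add_sub_cancel_left]
      rw [abs_of_pos (by linarith)]
      linarith)
    have := le_csSup hbdd this
    linarith
  have hmemiff : ∀ x, x ∈ S₀ ↔ h x ∈ S₀ := by
    intro x
    simp only [hS₀def, Set.mem_setOf_eq]
    have : f (h x) = h x ↔ f x = x := by
      rw [perm_fix_symm f (h x)]
      constructor
      · intro hh1
        have : h (f x) = h x := by rw [conj, hh1]
        have := h.injective this
        exact this
      · intro hh1
        rw [← conj, hh1]
    exact not_congr this.symm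
  have himg : h '' S₀ = S₀ := by
    ext y
    constructor
    · rintro ⟨x, hx, rfl⟩
      exact (hmemiff x).1 hx
    · intro hy
      refine ⟨h.symm y, ?_, h.apply_symm_apply y⟩
      have := hmemiff (h.symm y)
      rw [h.apply_symm_apply] at this
      exact this.2 hy
  have hhs : h s = s := by
    have := Monotone.map_csSup_of_continuousAt (hhc.continuousAt) hhm.monotone hS₀ne hbdd
    rw [himg] at this
    exact this
  obtain ⟨δ, hδ, hclear⟩ := exists_delta_clear (hBf.union hBh) s
  have hfI : ∀ x ∈ Set.Ioo (s - δ) s, IsLocallyAffineAt (⇑f) x := by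
    intro x hx
    by_contra hb
    exact hclear x (Set.mem_union_left _ hb) hx
  have hhI : ∀ x ∈ Set.Ioo (s - δ) s, IsLocallyAffineAt (⇑h) x := by
    intro x hx
    by_contra hb
    exact hclear x (Set.mem_union_right _ hb) hx
  have hzI : s - δ / 2 ∈ Set.Ioo (s - δ) s := ⟨by linarith, by linarith⟩
  obtain ⟨A, B, hAB⟩ := glueAffine isOpen_Ioo isPreconnected_Ioo hfI hzI
  obtain ⟨C, D, hCD⟩ := glueAffine isOpen_Ioo isPreconnected_Ioo hhI hzI
  have hsd : s - δ < s := by linarith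
  have hAs : A * s + B = s := by
    rw [← affine_closure hfc hsd hAB s ⟨hsd.le, le_refl s⟩, hfs]
  have hCs : C * s + D = s := by
    rw [← affine_closure hhc hsd hCD s ⟨hsd.le, le_refl s⟩, hhs]
  have hApos : 0 < A := by
    have h1 := hAB (s - δ / 2) hzI
    have h2 := hAB (s - δ / 3) ⟨by linarith, by linarith⟩
    have h3 : f (s - δ / 2) < f (s - δ / 3) := hfm (by linarith)
    rw [h1, h2] at h3
    nlinarith
  have hCpos : 0 < C := by
    have h1 := hCD (s - δ / 2) hzI
    have h2 := hCD (s - δ / 3) ⟨by linarith, by linarith⟩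
    have h3 : h (s - δ / 2) < h (s - δ / 3) := hhm (by linarith)
    rw [h1, h2] at h3
    nlinarith
  have hAne1 : A ≠ 1 := by
    obtain ⟨w, hw, hw1⟩ := exists_lt_of_lt_csSup hS₀ne (show s - δ < sSup S₀ by rw [← hs]; linarith)
    have hwle : w ≤ s := le_csSup hbdd hw
    have hwlt : w < s := lt_of_le_of_ne hwle (fun hh => hw (hh ▸ hfs))
    intro hA1
    have hB0 : B = 0 := by rw [hA1] at hAs; linarith
    have := hAB w ⟨hw1, hwlt⟩
    rw [hA1, hB0] at this
    exact hw (by rw [this]; ring)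
  -- choose a smaller interval where compositions stay inside
  have hhc_at : ContinuousAt (⇑h) s := hhc.continuousAt
  have hfc_at : ContinuousAt (⇑f) s := hfc.continuousAt
  obtain ⟨εh, hεh, hεhp⟩ := Metric.continuousAt_iff.1 hhc_at δ hδ
  obtain ⟨εf, hεf, hεfp⟩ := Metric.continuousAt_iff.1 hfc_at (min δ εh) (lt_min hδ hεh)
  set δ₃ := min δ εf with hδ₃def
  have hδ₃ : 0 < δ₃ := lt_min hδ hεf
  have hkey : ∀ x ∈ Set.Ioo (s - δ₃) s, C * x + D = (A * C * A) * x + (A * (C * B + D) + B) := by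
    intro x hx
    have hδ₃le : δ₃ ≤ δ := min_le_left _ _
    have hxI : x ∈ Set.Ioo (s - δ) s := ⟨by linarith [hx.1], hx.2⟩
    have hxd : dist x s < εf := by
      rw [Real.dist_eq, abs_of_neg (by linarith [hx.2] : x - s < 0)]
      have : s - δ₃ < x := hx.1
      have h4 : δ₃ ≤ εf := min_le_right _ _
      linarith
    have hfxd : dist (f x) (f s) < min δ εh := hεfp hxd
    rw [hfs] at hfxd
    have hfxlt : f x < s := by
      have := hfm hx.2
      rwa [hfs] at this
    have hfxI : f x ∈ Set.Ioo (s - δ) s := by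
      constructor
      · have h5 : dist (f x) s < δ := lt_of_lt_of_le hfxd (min_le_left _ _)
        rw [Real.dist_eq, abs_of_neg (by linarith)] at h5
        linarith
      · exact hfxlt
    have hhfxI : h (f x) ∈ Set.Ioo (s - δ) s := by
      constructor
      · have h5 : dist (f x) s < εh := lt_of_lt_of_le hfxd (min_le_right _ _)
        have h6 := hεhp h5
        rw [hhs] at h6
        rw [Real.dist_eq] at h6
        have h7 : h (f x) < s := by
          have := hhm hfxlt
          rwa [hhs] at this
        rw [abs_of_neg (by linarith)] at h6
        linarith
      · have := hhm hfxlt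
        rwa [hhs] at this
    have heq : h x = f (h (f x)) := by
      rw [conj x, f.apply_symm_apply]
    calc C * x + D = h x := (hCD x hxI).symm
    _ = f (h (f x)) := heq
    _ = A * (h (f x)) + B := hAB _ hhfxI
    _ = A * (C * (f x) + D) + B := by rw [hCD _ hfxI]
    _ = A * (C * (A * x + B) + D) + B := by rw [hAB _ hxI]
    _ = (A * C * A) * x + (A * (C * B + D) + B) := by ring
  have h1 := hkey (s - δ₃ / 2) ⟨by linarith, by linarith⟩
  have h2 := hkey (s - δ₃ / 3) ⟨by linarith, by linarith⟩
  obtain ⟨hC1, _⟩ := affine_coeff_eq (show s - δ₃/2 ≠ s - δ₃/3 by intro hh; simp at hh; linarith) h1 h2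
  have hA2 : A ^ 2 = 1 := by
    have : C * (A ^ 2 - 1) = 0 := by nlinarith [hC1]
    rcases mul_eq_zero.1 this with hh | hh
    · exact absurd hh (ne_of_gt hCpos)
    · linarith
  have : (A - 1) * (A + 1) = 0 := by nlinarith
  rcases mul_eq_zero.1 this with hh | hh
  · exact hAne1 (by linarith)
  · linarith

lemma strictAnti_fixed_point (h : Equiv.Perm ℝ) (hhc : Continuous ⇑h)
    (hha : StrictAnti ⇑h) : ∃ p, h p = p := by
  rcases lt_trichotomy (h 0) 0 with h0 | h0 | h0
  · -- h 0 < 0 : fixed point in [h 0, 0]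
    set g : ℝ → ℝ := fun x => h x - x with hg
    have hgc : ContinuousOn g (Set.Icc (h 0) 0) :=
      (hhc.sub continuous_id).continuousOn
    have hga : 0 < g (h 0) := by
      have : h 0 < h (h 0) := hha h0
      simp only [hg]; linarith
    have hgb : g 0 < 0 := by simp only [hg]; linarith
    have := intermediate_value_Icc' (le_of_lt h0) hgc
    have h0mem : (0:ℝ) ∈ Set.Icc (g 0) (g (h 0)) := ⟨hgb.le, hga.le⟩
    obtain ⟨p, _, hp⟩ := this h0mem
    exact ⟨p, by simp only [hg] at hp; linarith⟩
  · exact ⟨0, h0⟩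
  · -- h 0 > 0 : fixed point in [0, h 0]
    set g : ℝ → ℝ := fun x => h x - x with hg
    have hgc : ContinuousOn g (Set.Icc 0 (h 0)) :=
      (hhc.sub continuous_id).continuousOn
    have hga : 0 < g 0 := by simp only [hg]; linarith
    have hgb : g (h 0) < 0 := by
      have : h (h 0) < h 0 := hha h0
      simp only [hg]; linarith
    have := intermediate_value_Icc' (le_of_lt h0) hgc
    have h0mem : (0:ℝ) ∈ Set.Icc (g (h 0)) (g 0) := ⟨hgb.le, hga.le⟩
    obtain ⟨p, _, hp⟩ := this h0mem
    exact ⟨p, by simp only [hg] at hp; linarith⟩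

lemma sigma_construction (f h : Equiv.Perm ℝ) (hhP : InPLF h)
    (hfm : StrictMono ⇑f) (hha : StrictAnti ⇑h)
    (conj : ∀ x, h (f x) = f.symm (h x))
    (u v : ℝ) (huv : u ≤ v) (hhu : h u = v) (hhv : h v = u)
    (hwin : ∀ x, u ≤ x → x ≤ v → h (h x) = x)
    (hfu : f u = u) (hfv : f v = v) :
    ∃ σ : Equiv.Perm ℝ, InPLF σ ∧ σ * σ = 1 ∧ σ * f * σ = f⁻¹ := by
  have hsymm_v : h.symm v = u := by rw [← hhu, h.symm_apply_apply]
  have hsymm_u : h.symm u = v := by rw [← hhv, h.symm_apply_apply]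
  have hsa : StrictAnti ⇑h.symm := perm_symm_strictAnti hha
  set σf : ℝ → ℝ := fun x => if x ≤ v then h x else h.symm x with hσf
  have hval_le : ∀ x, x ≤ v → σf x = h x := fun x hx => if_pos hx
  have hval_gt : ∀ x, v < x → σf x = h.symm x := fun x hx => if_neg (not_le.2 hx)
  have hinvol : ∀ x, σf (σf x) = x := by
    intro x
    rcases le_or_gt x v with hx | hx
    · rw [hval_le x hx]
      rcases le_or_gt u x with hux | hux
      · have h1 : h x ≤ v := by rw [← hhu]; exact hha.antitone hux
        rw [hval_le _ h1]
        exact hwin x hux hx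
      · have h1 : v < h x := by rw [← hhu]; exact hha hux
        rw [hval_gt _ h1, h.symm_apply_apply]
    · rw [hval_gt x hx]
      have h1 : h.symm x < u := by rw [← hsymm_v]; exact hsa hx
      rw [hval_le _ (h1.le.trans huv), h.apply_symm_apply]
  have conj2 : ∀ y, f (h y) = h (f.symm y) := by
    intro y
    have := conj (f.symm y)
    rw [f.apply_symm_apply] at this
    rw [this, f.apply_symm_apply]
  have hrev : ∀ x, σf (f (σf x)) = f.symm x := by
    intro x
    rcases lt_or_ge x u with hx | hx
    · -- x < u
      rw [hval_le x (hx.le.trans huv)]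
      have h1 : v < h x := by rw [← hhu]; exact hha hx
      have h2 : v < f (h x) := by
        have := hfm h1
        rwa [hfv] at this
      rw [hval_gt _ h2, conj2 x, h.symm_apply_apply]
    · rcases le_or_gt x v with hxv | hxv
      · -- u ≤ x ≤ v
        rw [hval_le x hxv]
        have h1 : h x ≤ v := by rw [← hhu]; exact hha.antitone hx
        have h1' : u ≤ h x := by rw [← hhv]; exact hha.antitone hxv
        have h2 : f (h x) ≤ v := by
          have := hfm.monotone h1
          rwa [hfv] at this
        rw [hval_le _ h2, conj (h x), hwin x hx hxv]
      · -- v < x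
        rw [hval_gt x hxv]
        have h1 : h.symm x < u := by rw [← hsymm_v]; exact hsa hxv
        have h2 : f (h.symm x) ≤ v := by
          have := hfm h1
          rw [hfu] at this
          linarith [huv]
        rw [hval_le _ h2, conj (h.symm x), h.apply_symm_apply]
  have hcont : Continuous σf := by
    refine Continuous.if_le hhP.1.1 hhP.1.2 continuous_id continuous_const ?_
    intro x hx
    rw [hx, hhv, hsymm_v]
  set σ : Equiv.Perm ℝ := ⟨σf, σf, hinvol, hinvol⟩ with hσdef
  have hσcoe : ⇑σ = σf := rfl
  have hσsymmcoe : ⇑σ.symm = σf := rfl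
  have hBhs : {x : ℝ | ¬ IsLocallyAffineAt (⇑h.symm) x}.Finite := by
    have := (InPLF.inv hhP).2
    have hcoe : ⇑(h⁻¹) = ⇑h.symm := rfl
    rwa [hcoe] at this
  refine ⟨σ, ⟨⟨by rw [hσcoe]; exact hcont, by rw [hσsymmcoe]; exact hcont⟩, ?_⟩, ?_, ?_⟩
  · -- finitely many breakpoints
    refine Set.Finite.subset ((hhP.2.union hBhs).union (Set.finite_singleton v)) ?_
    intro x hx
    simp only [Set.mem_setOf_eq, hσcoe] at hx
    rcases lt_trichotomy x v with hxv | hxv | hxv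
    · left; left
      simp only [Set.mem_setOf_eq]
      intro hgood
      refine hx (locAff_congr ?_ hgood)
      filter_upwards [Iio_mem_nhds hxv] with y hy
      exact hval_le y (le_of_lt hy)
    · right; exact hxv
    · left; right
      simp only [Set.mem_setOf_eq]
      intro hgood
      refine hx (locAff_congr ?_ hgood)
      filter_upwards [Ioi_mem_nhds hxv] with y hy
      exact hval_gt y hy
  · ext x
    simp only [Equiv.Perm.mul_apply, Equiv.Perm.one_apply, hσcoe]
    exact hinvol x
  · ext x
    simp only [Equiv.Perm.mul_apply, hσcoe]
    have : (f⁻¹ : Equiv.Perm ℝ) x = f.symm x := rfl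
    rw [this]
    exact hrev x

lemma sign_dichotomy_global (f : Equiv.Perm ℝ) (hfc : Continuous ⇑f)
    (hnf : ∀ x, f x ≠ x) : (∀ x, x < f x) ∨ (∀ x, f x < x) := by
  by_cases hall : ∀ x, x < f x
  · exact Or.inl hall
  · push_neg at hall
    obtain ⟨x₁, hx₁⟩ := hall
    have hx₁' : f x₁ < x₁ := lt_of_le_of_ne hx₁ (hnf x₁)
    right
    intro x
    by_contra hcon
    have hx' : x < f x := lt_of_le_of_ne (not_lt.1 hcon) (Ne.symm (hnf x))
    set g : ℝ → ℝ := fun t => f t - t with hg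
    have hgc : Continuous g := hfc.sub continuous_id
    have hfix : ∃ e, f e = e := by
      rcases le_total x x₁ with hle | hle
      · have := intermediate_value_Icc' hle hgc.continuousOn
        have h0 : (0:ℝ) ∈ Set.Icc (g x₁) (g x) := ⟨by simp [hg]; linarith, by simp [hg]; linarith⟩
        obtain ⟨e, _, he⟩ := this h0
        exact ⟨e, by simp [hg] at he; linarith⟩
      · have := intermediate_value_Icc hle hgc.continuousOn
        have h0 : (0:ℝ) ∈ Set.Icc (g x₁) (g x) := ⟨by simp [hg]; linarith, by simp [hg]; linarith⟩
        obtain ⟨e, _, he⟩ := this h0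
        exact ⟨e, by simp [hg] at he; linarith⟩
    obtain ⟨e, he⟩ := hfix
    exact hnf e he

lemma sign_dichotomy_Ioo (f : Equiv.Perm ℝ) (hfc : Continuous ⇑f) {u v : ℝ}
    (hnf : ∀ x ∈ Set.Ioo u v, f x ≠ x) :
    (∀ x ∈ Set.Ioo u v, x < f x) ∨ (∀ x ∈ Set.Ioo u v, f x < x) := by
  by_cases hall : ∀ x ∈ Set.Ioo u v, x < f x
  · exact Or.inl hall
  · push_neg at hall
    obtain ⟨x₁, hx₁I, hx₁⟩ := hall
    have hx₁' : f x₁ < x₁ := lt_of_le_of_ne hx₁ (hnf x₁ hx₁I)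
    right
    intro x hxI
    by_contra hcon
    have hx' : x < f x := lt_of_le_of_ne (not_lt.1 hcon) (Ne.symm (hnf x hxI))
    set g : ℝ → ℝ := fun t => f t - t with hg
    have hgc : Continuous g := hfc.sub continuous_id
    have hfix : ∃ e ∈ Set.Ioo u v, f e = e := by
      rcases le_total x x₁ with hle | hle
      · have := intermediate_value_Icc' hle hgc.continuousOn
        have h0 : (0:ℝ) ∈ Set.Icc (g x₁) (g x) := ⟨by simp [hg]; linarith, by simp [hg]; linarith⟩
        obtain ⟨e, heI, he⟩ := this h0
        refine ⟨e, ⟨lt_of_lt_of_le hxI.1 heI.1, lt_of_le_of_lt heI.2 hx₁I.2⟩, ?_⟩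
        simp [hg] at he; linarith
      · have := intermediate_value_Icc hle hgc.continuousOn
        have h0 : (0:ℝ) ∈ Set.Icc (g x₁) (g x) := ⟨by simp [hg]; linarith, by simp [hg]; linarith⟩
        obtain ⟨e, heI, he⟩ := this h0
        refine ⟨e, ⟨lt_of_lt_of_le hx₁I.1 heI.1, lt_of_le_of_lt heI.2 hxI.2⟩, ?_⟩
        simp [hg] at he; linarith
    obtain ⟨e, _, he⟩ := hfix
    exact hnf e ‹e ∈ Set.Ioo u v› he

lemma sq_one_of_anti (f h : Equiv.Perm ℝ) (hfP : InPLF f) (hhP : InPLF h)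
    (hfa : StrictAnti ⇑f) (hhm : StrictMono ⇑h)
    (conj : ∀ x, h (f x) = f.symm (h x)) : ∀ x, f (f x) = x := by
  set f2 : Equiv.Perm ℝ := f * f with hf2
  have hf2coe : ∀ x, f2 x = f (f x) := fun x => rfl
  have hf2symm : ∀ x, f2.symm x = f.symm (f.symm x) := fun x => rfl
  have hf2m : StrictMono ⇑f2 := by
    intro a b hab
    exact hfa (hfa hab)
  have conj2 : ∀ x, h (f2 x) = f2.symm (h x) := by
    intro x
    rw [hf2coe, hf2symm, conj (f x), conj x]
  have := revOP_id f2 h (hfP.mul hfP).2 hhP.2 (hfP.mul hfP).1.1 hhP.1.1 hf2m hhm conj2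
  intro x
  have h1 := this x
  rw [hf2coe] at h1
  exact h1

/-- In PLF(ℝ), reversibility and strong reversibility are equivalent. -/
theorem stmt_6 (f : Equiv.Perm ℝ) (hf : InPLF f) :
    (∃ h : Equiv.Perm ℝ, InPLF h ∧ h * f * h⁻¹ = f⁻¹) ↔
    (∃ σ : Equiv.Perm ℝ, InPLF σ ∧ σ * σ = 1 ∧ σ * f * σ = f⁻¹) := by
  constructor
  · rintro ⟨h, hhP, hconj⟩
    have hfc : Continuous ⇑f := hf.1.1
    have hhc : Continuous ⇑h := hhP.1.1
    have conj : ∀ x, h (f x) = f.symm (h x) := by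
      intro x
      have h1 : h * f = f⁻¹ * h := by
        calc h * f = (h * f * h⁻¹) * h := by group
        _ = f⁻¹ * h := by rw [hconj]
      have h2 := Equiv.ext_iff.1 h1 x
      simpa [Equiv.Perm.mul_apply] using h2
    have conj2 : ∀ y, f (h y) = h (f.symm y) := by
      intro y
      have := conj (f.symm y)
      rw [f.apply_symm_apply] at this
      rw [this, f.apply_symm_apply]
    -- trivial-σ case helper
    have easy : (∀ x, f (f x) = x) → ∃ σ : Equiv.Perm ℝ, InPLF σ ∧ σ * σ = 1 ∧ σ * f * σ = f⁻¹ := by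
      intro hsq
      have hff : f * f = 1 := by
        ext x
        simp only [Equiv.Perm.mul_apply, Equiv.Perm.one_apply]
        exact hsq x
      refine ⟨1, InPLF_one, by rw [mul_one], ?_⟩
      rw [one_mul, mul_one]
      exact eq_inv_of_mul_eq_one_left hff
    rcases Continuous.strictMono_of_inj hfc f.injective with hfm | hfa
    · rcases Continuous.strictMono_of_inj hhc h.injective with hhm | hha
      · -- f mono, h mono : f = id
        have hfix := revOP_id f h hf.2 hhP.2 hfc hhc hfm hhm conj
        exact easy (fun x => by rw [hfix, hfix])
      · -- MAIN CASE : f mono, h anti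
        obtain ⟨p, hp⟩ := strictAnti_fixed_point h hhc hha
        set c : Equiv.Perm ℝ := h * h with hcdef
        have hccoe : ∀ x, c x = h (h x) := fun x => rfl
        have hcsymm : ∀ x, c.symm x = h.symm (h.symm x) := fun x => rfl
        have hcm : StrictMono ⇑c := fun a b hab => hha (hha hab)
        have hcc : Continuous ⇑c := (hhP.mul hhP).1.1
        have hBc : {x : ℝ | ¬ IsLocallyAffineAt (⇑c) x}.Finite := (hhP.mul hhP).2
        have hcp : c p = p := by rw [hccoe, hp, hp]
        have hcomm_f : ∀ x, c (f x) = f (c x) := by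
          intro x
          rw [hccoe, hccoe, conj x, ← conj2 (h x)]
        have hcomm_fs : ∀ x, c (f.symm x) = f.symm (c x) := by
          intro x
          have h1 := hcomm_f (f.symm x)
          rw [f.apply_symm_apply] at h1
          rw [h1, f.symm_apply_apply]
        have hfixiff : ∀ x, f x = x ↔ f (h x) = h x := by
          intro x
          rw [perm_fix_symm f (h x), ← conj x]
          constructor
          · intro h1; rw [h1]
          · intro h1; exact h.injective h1
        by_cases hfp : f p = p
        · exact sigma_construction f h hhP hfm hha conj p p (le_refl p) hp hp
            (fun x h1 h2 => by rw [le_antisymm h2 h1, hp, hp]) hfp hfp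
        · set F : Set ℝ := {x | f x = x} with hFdef
          have hFc : IsClosed F := isClosed_eq hfc continuous_id
          have hFiff : ∀ x, x ∈ F → h x ∈ F := by
            intro x hx
            exact (hfixiff x).1 hx
          have hFiffs : ∀ x, x ∈ F → h.symm x ∈ F := by
            intro x hx
            have h1 := hfixiff (h.symm x)
            rw [h.apply_symm_apply] at h1
            exact h1.2 hx
          by_cases hFne : F.Nonempty
          · obtain ⟨q, hq⟩ := hFne
            have hqp : q ≠ p := fun e => hfp (e ▸ hq)
            have hbelow : (F ∩ Set.Iic p).Nonempty := by
              rcases lt_or_gt_of_ne hqp with hlt | hgt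
              · exact ⟨q, hq, hlt.le⟩
              · refine ⟨h q, hFiff q hq, ?_⟩
                have := hha hgt
                rw [hp] at this
                exact this.le
            have habove : (F ∩ Set.Ici p).Nonempty := by
              rcases lt_or_gt_of_ne hqp with hlt | hgt
              · refine ⟨h q, hFiff q hq, ?_⟩
                have := hha hlt
                rw [hp] at this
                exact this.le
              · exact ⟨q, hq, hgt.le⟩
            have hubdd : BddAbove (F ∩ Set.Iic p) := ⟨p, fun y hy => hy.2⟩
            have hvbdd : BddBelow (F ∩ Set.Ici p) := ⟨p, fun y hy => hy.2⟩
            set u := sSup (F ∩ Set.Iic p) with hudef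
            set v := sInf (F ∩ Set.Ici p) with hvdef
            have humem : u ∈ F ∩ Set.Iic p :=
              (hFc.inter isClosed_Iic).csSup_mem hbelow hubdd
            have hvmem : v ∈ F ∩ Set.Ici p :=
              (hFc.inter isClosed_Ici).csInf_mem habove hvbdd
            have hup : u < p := lt_of_le_of_ne humem.2 (fun e => hfp (e ▸ humem.1))
            have hpv : p < v := lt_of_le_of_ne hvmem.2 (fun e => hfp (e.symm ▸ hvmem.1))
            have hfu : f u = u := humem.1
            have hfv : f v = v := hvmem.1
            have hsep : ∀ y ∈ F, y ≤ u ∨ v ≤ y := by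
              intro y hy
              rcases le_total y p with h1 | h1
              · exact Or.inl (le_csSup hubdd ⟨hy, h1⟩)
              · exact Or.inr (csInf_le hvbdd ⟨hy, h1⟩)
            have hnofix : ∀ x ∈ Set.Ioo u v, f x ≠ x := by
              intro x hx hfx
              rcases hsep x hfx with h1 | h1
              · exact absurd h1 (not_le.2 hx.1)
              · exact absurd h1 (not_le.2 hx.2)
            -- c fixes u and v
            have hcpl : ∀ x, x < p → c x < p := by
              intro x hx
              have := hcm hx
              rwa [hcp] at this
            have hcpls : ∀ x, x < p → c.symm x < p := by
              intro x hx
              have hcsp : c.symm p = p := (perm_fix_symm c p).1 hcp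
              have := perm_symm_strictMono hcm hx
              rwa [hcsp] at this
            have hcpg : ∀ x, p < x → p < c x := by
              intro x hx
              have := hcm hx
              rwa [hcp] at this
            have hcpgs : ∀ x, p < x → p < c.symm x := by
              intro x hx
              have hcsp : c.symm p = p := (perm_fix_symm c p).1 hcp
              have := perm_symm_strictMono hcm hx
              rwa [hcsp] at this
            have hcF : ∀ x, x ∈ F → c x ∈ F := by
              intro x hx
              have h1 := hFiff _ (hFiff x hx)
              rwa [← hccoe] at h1
            have hcFs : ∀ x, x ∈ F → c.symm x ∈ F := by
              intro x hx
              have h1 := hFiffs _ (hFiffs x hx)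
              rwa [← hcsymm] at h1
            have hcu : c u = u := by
              have h3 : c u ≤ u := le_csSup hubdd ⟨hcF u humem.1, (hcpl u hup).le⟩
              have h6 : c.symm u ≤ u := le_csSup hubdd ⟨hcFs u humem.1, (hcpls u hup).le⟩
              have h7 : u ≤ c u := by
                have := hcm.monotone h6
                rwa [c.apply_symm_apply] at this
              exact le_antisymm h3 h7
            have hcv : c v = v := by
              have h3 : v ≤ c v := csInf_le hvbdd ⟨hcF v hvmem.1, (hcpg v hpv).le⟩
              have h6 : v ≤ c.symm v := csInf_le hvbdd ⟨hcFs v hvmem.1, (hcpgs v hpv).le⟩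
              have h7 : c v ≤ v := by
                have := hcm.monotone h6
                rwa [c.apply_symm_apply] at this
              exact le_antisymm h7 h3
            -- engine gives h∘h = id on the window
            have hwinIoo : ∀ x ∈ Set.Ioo u v, c x = x := by
              rcases sign_dichotomy_Ioo f hfc hnofix with hpos | hneg
              · exact engine_window f hfm (⇑c) hcc hBc hcomm_f u v p hup hpv hfu hfv
                  hpos hcu hcv hcp
              · have hfsu : f.symm u = u := (perm_fix_symm f u).1 hfu
                have hfsv : f.symm v = v := (perm_fix_symm f v).1 hfv
                have hgid : ∀ x ∈ Set.Ioo u v, x < f.symm x := by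
                  intro x hx
                  by_contra hcon
                  have h1 : f.symm x ≤ x := not_lt.1 hcon
                  have h2 : f.symm x ∈ Set.Ioo u v := by
                    constructor
                    · rw [← hfsu]; exact perm_symm_strictMono hfm hx.1
                    · rw [← hfsv]; exact perm_symm_strictMono hfm hx.2
                  have h3 := hneg (f.symm x) h2
                  rw [f.apply_symm_apply] at h3
                  exact absurd (h3.trans_le h1) (lt_irrefl x)
                have := engine_window f⁻¹ (perm_symm_strictMono hfm) (⇑c) hcc hBc
                  hcomm_fs u v p hup hpv hfsu hfsv hgid hcu hcv hcp
                exact this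
            have hwin : ∀ x, u ≤ x → x ≤ v → h (h x) = x := by
              intro x h1 h2
              rcases eq_or_lt_of_le h1 with he | hlt
              · rw [← he, ← hccoe, hcu]
              · rcases eq_or_lt_of_le h2 with he | hlt2
                · rw [he, ← hccoe, hcv]
                · rw [← hccoe]
                  exact hwinIoo x ⟨hlt, hlt2⟩
            -- h swaps u and v
            have hhu_ge : v ≤ h u := by
              refine csInf_le hvbdd ⟨hFiff u humem.1, ?_⟩
              have := hha hup
              rw [hp] at this
              exact this.le
            have hhv_le : h v ≤ u := by
              refine le_csSup hubdd ⟨hFiff v hvmem.1, ?_⟩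
              have := hha hpv
              rw [hp] at this
              exact this.le
            have hhvu : h v = u := by
              by_contra hne
              have hlt : h v < u := lt_of_le_of_ne hhv_le hne
              have h1 : h u < h (h v) := hha hlt
              have h2 : h (h v) = v := hwin v (hup.trans hpv).le (le_refl v)
              rw [h2] at h1
              exact absurd hhu_ge (not_le.2 h1)
            have hhuv : h u = v := by
              rw [← hhvu]
              exact hwin v (hup.trans hpv).le (le_refl v)
            exact sigma_construction f h hhP hfm hha conj u v (hup.trans hpv).le
              hhuv hhvu hwin hfu hfv
          · -- F empty : h∘h = id globally, take σ := h
            have hnf : ∀ x, f x ≠ x := by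
              intro x hx
              exact hFne ⟨x, hx⟩
            have hcid : ∀ x, c x = x := by
              rcases sign_dichotomy_global f hfc hnf with hpos | hneg
              · exact engine_global f hfm (⇑c) hcc hBc hcomm_f p hcp hpos
              · have hgid : ∀ x : ℝ, x < f.symm x := by
                  intro x
                  by_contra hcon
                  have h1 : f.symm x ≤ x := not_lt.1 hcon
                  have h3 := hneg (f.symm x)
                  rw [f.apply_symm_apply] at h3
                  exact absurd (h3.trans_le h1) (lt_irrefl x)
                exact engine_global f⁻¹ (perm_symm_strictMono hfm) (⇑c) hcc hBc
                  hcomm_fs p hcp hgid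
            have hsq : h * h = 1 := by
              ext x
              simp only [Equiv.Perm.mul_apply, Equiv.Perm.one_apply]
              exact hcid x
            have hinv : h⁻¹ = h := inv_eq_of_mul_eq_one_right hsq
            refine ⟨h, hhP, hsq, ?_⟩
            have heq : h * f * h = h * f * h⁻¹ := by rw [hinv]
            rw [heq]
            exact hconj
    · rcases Continuous.strictMono_of_inj hhc h.injective with hhm | hha
      · exact easy (sq_one_of_anti f h hf hhP hfa hhm conj)
      · -- f anti, h anti : use f*h as mono reverser
        set h' : Equiv.Perm ℝ := f * h with hh'
        have hh'm : StrictMono ⇑h' := fun a b hab => hfa (hha hab)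
        have conj' : ∀ x, h' (f x) = f.symm (h' x) := by
          intro x
          show f (h (f x)) = f.symm (f (h x))
          rw [conj x, f.apply_symm_apply, f.symm_apply_apply]
        exact easy (sq_one_of_anti f h' hf (hf.mul hhP) hfa hh'm conj')
  · rintro ⟨σ, hσP, hσ2, hσc⟩
    refine ⟨σ, hσP, ?_⟩
    have hσinv : σ⁻¹ = σ := inv_eq_of_mul_eq_one_right hσ2
    rw [hσinv]
    exact hσc
end

section
/- Let f be a strictly increasing element of PL(ℝ). Then f is strongly reversible in PL(ℝ) (i.e., there is an involution σ ∈ PL(ℝ) with σ ∘ f ∘ σ = f⁻¹) if and only if there is a strictly decreasing element h of PL(ℝ) with h ∘ f ∘ h⁻¹ = f⁻¹. -/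
open Filter Set

/-! ### Auxiliary notions -/

/-- non-affinity set -/
def NA (f : ℝ → ℝ) : Set ℝ := {x : ℝ | ¬ IsLocallyAffineAt f x}

/-- a set with no accumulation points -/
def NAcc (S : Set ℝ) : Prop := ∀ x : ℝ, ¬ AccPt x (Filter.principal S)

lemma inPL_iff (f : Equiv.Perm ℝ) : InPL f ↔ IsHomeo f ∧ NAcc (NA f) := Iff.rfl

lemma la_congr {f g : ℝ → ℝ} {x : ℝ} (hfg : ∀ᶠ y in nhds x, f y = g y)
    (hg : IsLocallyAffineAt g x) : IsLocallyAffineAt f x := by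
  obtain ⟨a, b, hab⟩ := hg
  exact ⟨a, b, hfg.mp (hab.mono fun y h1 h2 => h2.trans h1)⟩

lemma IsLocallyAffineAt.continuousAt {f : ℝ → ℝ} {x : ℝ} (h : IsLocallyAffineAt f x) :
    ContinuousAt f x := by
  obtain ⟨a, b, hab⟩ := h
  have : ContinuousAt (fun y => a * y + b) x := by fun_prop
  exact this.congr (hab.mono fun y hy => hy.symm)

lemma la_comp {g u : ℝ → ℝ} {x : ℝ} (hg : IsLocallyAffineAt g (u x))
    (hu : IsLocallyAffineAt u x) : IsLocallyAffineAt (fun y => g (u y)) x := by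
  have hcont : ContinuousAt u x := IsLocallyAffineAt.continuousAt hu
  obtain ⟨a, b, hab⟩ := hg
  obtain ⟨c, d, hcd⟩ := hu
  have h1 : ∀ᶠ y in nhds x, g (u y) = a * u y + b := hcont (hab)
  refine ⟨a * c, a * d + b, ?_⟩
  filter_upwards [h1, hcd] with y h1 h2
  rw [h1, h2]; ring

lemma la_inv {f : Equiv.Perm ℝ} (hc : Continuous f.symm) {x : ℝ}
    (h : IsLocallyAffineAt f x) : IsLocallyAffineAt f.symm (f x) := by
  obtain ⟨a, b, hab⟩ := h
  have ha : a ≠ 0 := by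
    rintro rfl
    obtain ⟨ε, hε, hb⟩ := Metric.eventually_nhds_iff.1 hab
    have h1 : f x = 0 * x + b := hb (by simp [hε])
    have h2 : f (x + ε/2) = 0 * (x + ε/2) + b := by
      refine hb ?_
      simp only [Real.dist_eq, add_sub_cancel_left]
      rw [abs_of_pos (by linarith)]; linarith
    simp only [zero_mul, zero_add] at h1 h2
    have := f.injective (h1.trans h2.symm)
    linarith
  refine ⟨a⁻¹, -b/a, ?_⟩
  have hev : ∀ᶠ y in nhds (f x), f.symm y ∈ {z | f z = a * z + b} := by
    have : {z | f z = a * z + b} ∈ nhds x := hab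
    have hx : f.symm (f x) = x := f.symm_apply_apply x
    exact hc.continuousAt (by rw [hx]; exact this)
  filter_upwards [hev] with y hy
  have : f (f.symm y) = a * f.symm y + b := hy
  rw [f.apply_symm_apply] at this
  field_simp
  linarith

lemma nacc_mono {S T : Set ℝ} (hST : S ⊆ T) (hT : NAcc T) : NAcc S :=
  fun x hx => hT x (hx.mono (principal_mono.2 hST))

lemma nacc_union {S T : Set ℝ} (hS : NAcc S) (hT : NAcc T) : NAcc (S ∪ T) := by
  intro x hx
  rw [AccPt, ← sup_principal, inf_sup_left] at hx
  rcases sup_neBot.1 hx with h | h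
  · exact hS x h
  · exact hT x h

lemma nacc_empty : NAcc (∅ : Set ℝ) := by
  intro x hx
  rw [AccPt, principal_empty, inf_bot_eq] at hx
  exact hx.ne rfl

lemma nacc_singleton (p : ℝ) : NAcc ({p} : Set ℝ) := by
  intro x hx
  rw [accPt_iff_nhds] at hx
  by_cases hxp : x = p
  · obtain ⟨y, ⟨_, hy2⟩, hy3⟩ := hx univ univ_mem
    exact hy3 (by rw [hxp]; exact hy2)
  · obtain ⟨y, ⟨hy1, hy2⟩, _⟩ := hx {p}ᶜ ((isOpen_compl_singleton).mem_nhds hxp)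
    exact hy1 hy2

/-- preimage of a no-accumulation set under a continuous injection with continuous inverse -/
lemma nacc_preimage {u : ℝ → ℝ} (hc : Continuous u) (hi : Function.Injective u)
    {S : Set ℝ} (hS : NAcc S) : NAcc (u ⁻¹' S) := by
  intro x hx
  have := hx.map (f := u) hc.continuousAt hi
  rw [Filter.map_principal] at this
  exact hS (u x) (this.mono (principal_mono.2 (image_preimage_subset u S)))

/-- AccPt is local: restrict to an open neighbourhood. -/
lemma accPt_localize {S : Set ℝ} {x : ℝ} {U : Set ℝ} (hU : U ∈ nhds x)
    (h : AccPt x (Filter.principal S)) : AccPt x (Filter.principal (S ∩ U)) := by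
  rw [accPt_iff_nhds] at h ⊢
  intro V hV
  obtain ⟨y, ⟨hy1, hy2⟩, hy3⟩ := h (V ∩ U) (inter_mem hV hU)
  exact ⟨y, ⟨hy1.1, hy2, hy1.2⟩, hy3⟩

lemma nacc_of_locally {S : Set ℝ}
    (h : ∀ x : ℝ, ∃ U ∈ nhds x, ∃ T, NAcc T ∧ S ∩ U ⊆ T) : NAcc S := by
  intro x hx
  obtain ⟨U, hU, T, hT, hST⟩ := h x
  exact nacc_mono hST hT x (accPt_localize hU hx)

lemma inPL_def {f : Equiv.Perm ℝ} : InPL f ↔ IsHomeo f ∧ NAcc (NA ⇑f) := Iff.rfl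

lemma inPL_inv {f : Equiv.Perm ℝ} (hf : InPL f) : InPL f⁻¹ := by
  rw [inPL_def] at hf ⊢
  obtain ⟨⟨hc1, hc2⟩, hN⟩ := hf
  have hcoe : ⇑f⁻¹ = ⇑f.symm := rfl
  refine ⟨⟨by rw [hcoe]; exact hc2, ?_⟩, ?_⟩
  · have : (f⁻¹).symm = f := rfl
    rw [this]; exact hc1
  · rw [hcoe]
    have hsub : NA ⇑f.symm ⊆ ⇑f.symm ⁻¹' (NA ⇑f) := by
      intro x hx
      simp only [NA, mem_setOf_eq, mem_preimage] at hx ⊢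
      intro hla
      exact hx (by simpa [f.apply_symm_apply] using la_inv hc2 hla)
    exact nacc_mono hsub (nacc_preimage hc2 f.symm.injective hN)

lemma inPL_mul {f g : Equiv.Perm ℝ} (hf : InPL f) (hg : InPL g) : InPL (f * g) := by
  rw [inPL_def] at hf hg ⊢
  obtain ⟨⟨hf1, hf2⟩, hfN⟩ := hf
  obtain ⟨⟨hg1, hg2⟩, hgN⟩ := hg
  have hcoe : ⇑(f * g) = fun y => f (g y) := rfl
  have hcoes : ⇑(f * g).symm = fun y => g.symm (f.symm y) := rfl
  refine ⟨⟨by rw [hcoe]; exact hf1.comp hg1, by rw [hcoes]; exact hg2.comp hf2⟩, ?_⟩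
  have hsub : NA ⇑(f * g) ⊆ NA ⇑g ∪ ⇑g ⁻¹' (NA ⇑f) := by
    intro x hx
    by_contra hmem
    simp only [mem_union, not_or, NA, mem_setOf_eq, not_not, mem_preimage] at hmem
    exact hx (by rw [hcoe]; exact la_comp hmem.2 hmem.1)
  exact nacc_mono hsub (nacc_union hgN (nacc_preimage hg1 g.injective hfN))

lemma inPL_one : InPL (1 : Equiv.Perm ℝ) := by
  refine ⟨⟨continuous_id, continuous_id⟩, ?_⟩
  intro x hx
  rw [accPt_iff_nhds] at hx
  obtain ⟨y, ⟨_, hy2⟩, _⟩ := hx univ univ_mem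
  exact hy2 ⟨1, 0, Eventually.of_forall fun z => by simp⟩

lemma inPL_zpow {f : Equiv.Perm ℝ} (hf : InPL f) (n : ℤ) : InPL (f ^ n) := by
  induction n using Int.induction_on with
  | zero => simpa using inPL_one
  | succ k ih => rw [zpow_add_one]; exact inPL_mul ih hf
  | pred k ih => rw [zpow_sub_one]; exact inPL_mul ih (inPL_inv hf)

/-- iterates of a map above the diagonal escape any bound -/
lemma iterate_escape {g : ℝ → ℝ} (hc : Continuous g) {x q : ℝ} (hxq : x ≤ q)
    (hgt : ∀ y, y ∈ Icc x q → y < g y) : ∃ n : ℕ, q < g^[n] x := by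
  by_contra hcon
  push_neg at hcon
  have hmem : ∀ n : ℕ, g^[n] x ∈ Icc x q := by
    intro n
    induction n with
    | zero => exact ⟨le_refl x, hxq⟩
    | succ k ih =>
      rw [Function.iterate_succ_apply']
      exact ⟨ih.1.trans (hgt _ ih).le, (Function.iterate_succ_apply' g k x) ▸ hcon (k+1)⟩
  obtain ⟨y₀, hy₀, hmin⟩ := isCompact_Icc.exists_isMinOn (f := fun y => g y - y)
    ⟨x, le_refl x, hxq⟩ ((hc.sub continuous_id).continuousOn)
  set ε := g y₀ - y₀ with hε
  have hεpos : 0 < ε := sub_pos.2 (hgt _ hy₀)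
  have hlow : ∀ n : ℕ, x + n * ε ≤ g^[n] x := by
    intro n
    induction n with
    | zero => simp
    | succ k ih =>
      rw [Function.iterate_succ_apply']
      have h1 : ε ≤ g (g^[k] x) - g^[k] x := hmin (hmem k)
      push_cast
      linarith
  obtain ⟨n, hn⟩ := exists_nat_gt ((q - x) / ε)
  have := hlow n
  have h2 : q - x < n * ε := (div_lt_iff₀ hεpos).1 hn
  have := hcon n
  linarith

/-- a continuous strictly decreasing surjection has a fixed point -/
lemma exists_fixed_of_anti {h : ℝ → ℝ} (hc : Continuous h) (ha : StrictAnti h) :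
    ∃ p : ℝ, h p = p := by
  set A := min 0 (h 0) - 1 with hA
  set B := max 0 (h 0) + 1 with hB
  have hAB : A ≤ B := by
    have h1 : min 0 (h 0) ≤ 0 := min_le_left _ _
    have h2 : (0:ℝ) ≤ max 0 (h 0) := le_max_left _ _
    simp only [hA, hB]
    linarith
  have hfa : 0 < h A - A := by
    have h1 : A ≤ 0 := by have : min 0 (h 0) ≤ 0 := min_le_left _ _; linarith
    have h2 : h A ≥ h 0 := ha.antitone h1
    have h3 : A < h 0 := by have : min 0 (h 0) ≤ h 0 := min_le_right _ _; linarith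
    linarith
  have hfb : h B - B < 0 := by
    have h1 : (0:ℝ) ≤ B := by have : (0:ℝ) ≤ max 0 (h 0) := le_max_left _ _; linarith
    have h2 : h B ≤ h 0 := ha.antitone h1
    have h3 : h 0 < B := by have : h 0 ≤ max 0 (h 0) := le_max_right _ _; linarith
    linarith
  have hcont : ContinuousOn (fun y => h y - y) (Icc A B) := (hc.sub continuous_id).continuousOn
  have hmem : (0:ℝ) ∈ Icc (h B - B) (h A - A) := ⟨hfb.le, hfa.le⟩
  obtain ⟨p, _, hp⟩ := intermediate_value_Icc' hAB hcont hmem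
  exact ⟨p, by linarith [sub_eq_zero.1 hp]⟩

lemma continuous_of_strictAnti_surj {s : ℝ → ℝ} (hm : StrictAnti s)
    (hs : Function.Surjective s) : Continuous s := by
  have hm' : StrictMono (fun x => s (-x)) := fun x y hxy => hm (neg_lt_neg hxy)
  have hs' : Function.Surjective (fun x => s (-x)) := by
    intro y; obtain ⟨x, hx⟩ := hs y; exact ⟨-x, by simp [hx]⟩
  have := (StrictMono.orderIsoOfSurjective _ hm' hs').continuous
  have h2 : s = (fun x => s (-x)) ∘ (fun x => -x) := by funext x; simp
  rw [h2]
  exact Continuous.comp (by simpa using this) continuous_neg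

lemma exists_zone_left {S : Set ℝ} {a : ℝ} (hS : ¬ AccPt a (Filter.principal S)) :
    ∃ q, q < a ∧ Ioo q a ∩ S = ∅ := by
  rw [accPt_iff_nhds] at hS
  push_neg at hS
  obtain ⟨U, hU, hUS⟩ := hS
  obtain ⟨ε, hε, hball⟩ := Metric.mem_nhds_iff.1 hU
  refine ⟨a - ε, by linarith, ?_⟩
  ext y
  simp only [mem_inter_iff, mem_Ioo, mem_empty_iff_false, iff_false, not_and]
  intro h1 hyS
  have hyU : y ∈ U := hball (by
    simp only [Metric.mem_ball, Real.dist_eq]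
    rw [abs_of_neg (by linarith [h1.2])]; linarith [h1.1, h1.2])
  have := hUS y ⟨hyU, hyS⟩
  rw [this] at h1; exact lt_irrefl a h1.2

lemma exists_zone_right {S : Set ℝ} {b : ℝ} (hS : ¬ AccPt b (Filter.principal S)) :
    ∃ r, b < r ∧ Ioo b r ∩ S = ∅ := by
  rw [accPt_iff_nhds] at hS
  push_neg at hS
  obtain ⟨U, hU, hUS⟩ := hS
  obtain ⟨ε, hε, hball⟩ := Metric.mem_nhds_iff.1 hU
  refine ⟨b + ε, by linarith, ?_⟩
  ext y
  simp only [mem_inter_iff, mem_Ioo, mem_empty_iff_false, iff_false, not_and]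
  intro h1 hyS
  have hyU : y ∈ U := hball (by
    simp only [Metric.mem_ball, Real.dist_eq]
    rw [abs_of_pos (by linarith [h1.1])]; linarith [h1.1, h1.2])
  have := hUS y ⟨hyU, hyS⟩
  rw [this] at h1; exact lt_irrefl b h1.1

/-- locally affine on an open interval implies affine with fixed coefficients -/
lemma affine_on_Ioo {q a : ℝ} (hqa : q < a) {g : ℝ → ℝ}
    (h : ∀ y, y ∈ Ioo q a → IsLocallyAffineAt g y) :
    ∃ A B : ℝ, ∀ y, y ∈ Ioo q a → g y = A * y + B := by
  have hy₀ : (q + a) / 2 ∈ Ioo q a := ⟨by linarith, by linarith⟩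
  obtain ⟨A, B, hAB⟩ := h _ hy₀
  set T : Set ℝ := {y | ∀ᶠ z in nhds y, g z = A * z + B} with hT
  set U : Set ℝ := {y | ∃ A' B' : ℝ, (∀ᶠ z in nhds y, g z = A' * z + B') ∧ ¬(A' = A ∧ B' = B)} with hU
  have hTopen : IsOpen T := by
    rw [isOpen_iff_mem_nhds]
    intro y hy
    exact hy.eventually_nhds
  have hUopen : IsOpen U := by
    rw [isOpen_iff_mem_nhds]
    intro y hy
    obtain ⟨A', B', hev, hne⟩ := hy
    filter_upwards [hev.eventually_nhds] with z hz
    exact ⟨A', B', hz, hne⟩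
  have hcover : Ioo q a ⊆ T ∪ U := by
    intro y hy
    obtain ⟨A', B', hev⟩ := h y hy
    by_cases hc : A' = A ∧ B' = B
    · left; rw [hT]; simpa [hc.1, hc.2] using hev
    · right; exact ⟨A', B', hev, hc⟩
  have hdisj : ∀ y, y ∈ T → y ∈ U → False := by
    intro y hyT hyU
    obtain ⟨A', B', hev', hne⟩ := hyU
    obtain ⟨ε, hε, hb⟩ := Metric.eventually_nhds_iff.1 (hyT.and hev')
    have e1 := hb (y := y) (by simp [hε])
    have e2 := hb (y := y + ε/2) (by simp only [Real.dist_eq, add_sub_cancel_left]; rw [abs_of_pos (by linarith)]; linarith)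
    have hA : A' = A := by
      have := e1.1.symm.trans e1.2
      have := e2.1.symm.trans e2.2
      nlinarith [e1.1, e1.2, e2.1, e2.2]
    have hB : B' = B := by
      have h1 := e1.1.symm.trans e1.2
      rw [hA] at h1
      linarith
    exact hne ⟨hA, hB⟩
  by_cases hUne : (Ioo q a ∩ U).Nonempty
  · exfalso
    obtain ⟨z, hz⟩ := (isPreconnected_Ioo (a := q) (b := a)) T U hTopen hUopen hcover
      ⟨(q+a)/2, hy₀, hAB⟩ hUne
    exact hdisj z hz.2.1 hz.2.2
  · refine ⟨A, B, fun y hy => ?_⟩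
    rcases hcover hy with hyT | hyU
    · exact hyT.self_of_nhds
    · exact absurd ⟨y, hy, hyU⟩ hUne

/-! ### Misc group/order lemmas -/

lemma perm_eq_one_of_sq {g : Equiv.Perm ℝ} (hm : StrictMono ⇑g) (h2 : g * g = 1) :
    g = 1 := by
  have hpt : ∀ x : ℝ, g (g x) = x := by
    intro x
    have := Equiv.congr_fun h2 x
    simpa using this
  ext x
  rcases lt_trichotomy (g x) x with hlt | heq | hgt
  · have := hm hlt
    rw [hpt x] at this
    exact absurd (this.trans hlt) (lt_irrefl x)
  · simpa using heq
  · have := hm hgt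
    rw [hpt x] at this
    exact absurd (hgt.trans this) (lt_irrefl x)

/-- the negation permutation -/
def negPerm : Equiv.Perm ℝ := Equiv.neg ℝ

lemma negPerm_apply (x : ℝ) : negPerm x = -x := rfl

lemma negPerm_symm_apply (x : ℝ) : negPerm.symm x = -x := rfl

lemma inPL_negPerm : InPL negPerm := by
  constructor
  · exact ⟨continuous_neg, continuous_neg⟩
  · intro x hx
    rw [accPt_iff_nhds] at hx
    obtain ⟨y, ⟨_, hy2⟩, _⟩ := hx univ univ_mem
    exact hy2 ⟨-1, 0, Eventually.of_forall fun z => by simp [negPerm_apply]⟩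

theorem stmt_7_forward (f : Equiv.Perm ℝ) (hf : InPL f) (hfm : StrictMono (⇑f)) :
    (∃ σ : Equiv.Perm ℝ, InPL σ ∧ σ * σ = 1 ∧ σ * f * σ = f⁻¹) →
    (∃ h : Equiv.Perm ℝ, InPL h ∧ StrictAnti (⇑h) ∧ h * f * h⁻¹ = f⁻¹) := by
  rintro ⟨σ, hσPL, hσ2, hσconj⟩
  rcases Continuous.strictMono_of_inj hσPL.1.1 σ.injective with hmono | hanti
  · -- σ is increasing, hence the identity, hence f is an involution, hence f = 1
    have hσ1 : σ = 1 := perm_eq_one_of_sq hmono hσ2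
    rw [hσ1, one_mul, mul_one] at hσconj
    have hff : f * f = 1 := by
      have h1 : f = f⁻¹ := hσconj
      nth_rewrite 2 [h1]
      simp
    have hf1 : f = 1 := perm_eq_one_of_sq hfm hff
    refine ⟨negPerm, inPL_negPerm, fun x y hxy => by simpa [negPerm_apply] using hxy, ?_⟩
    rw [hf1]
    simp
  · have hσinv : σ⁻¹ = σ := by
      exact inv_eq_of_mul_eq_one_right hσ2
    exact ⟨σ, hσPL, hanti, by rw [hσinv]; exact hσconj⟩

/-! ### Helpers for the backward direction -/

lemma strictMono_perm_symm {f : Equiv.Perm ℝ} (hfm : StrictMono ⇑f) :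
    StrictMono ⇑f.symm := by
  intro x y hxy
  have h1 : f (f.symm x) < f (f.symm y) := by
    rwa [f.apply_symm_apply, f.apply_symm_apply]
  exact lt_of_not_ge fun hle => absurd h1 (not_lt.2 (hfm.monotone hle))

/-- on an order-connected set where a continuous map has no fixed points, it is either
above or below the diagonal -/
lemma sign_dichotomy {f : ℝ → ℝ} (hc : Continuous f) {S : Set ℝ}
    (hconv : ∀ x y : ℝ, x ∈ S → y ∈ S → Icc x y ⊆ S)
    (hne : ∀ y, y ∈ S → f y ≠ y) :
    (∀ y, y ∈ S → y < f y) ∨ (∀ y, y ∈ S → f y < y) := by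
  by_cases hd : ∀ y, y ∈ S → y < f y
  · exact Or.inl hd
  · right
    push_neg at hd
    obtain ⟨y₂, hy₂S, hy₂⟩ := hd
    have hy₂lt : f y₂ < y₂ := lt_of_le_of_ne hy₂ (hne y₂ hy₂S)
    intro y hyS
    rcases lt_trichotomy (f y) y with h | h | h
    · exact h
    · exact absurd h (hne y hyS)
    · exfalso
      -- IVT between y and y₂
      rcases le_total y y₂ with hle | hle
      · have hcont : ContinuousOn (fun t => f t - t) (Icc y y₂) :=
          (hc.sub continuous_id).continuousOn
        have hmem : (0:ℝ) ∈ Icc (f y₂ - y₂) (f y - y) := ⟨by linarith, by linarith⟩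
        obtain ⟨z, hz, hz0⟩ := intermediate_value_Icc' hle hcont hmem
        exact hne z (hconv y y₂ hyS hy₂S hz) (by linarith [sub_eq_zero.1 hz0])
      · have hcont : ContinuousOn (fun t => f t - t) (Icc y₂ y) :=
          (hc.sub continuous_id).continuousOn
        have hmem : (0:ℝ) ∈ Icc (f y₂ - y₂) (f y - y) := ⟨by linarith, by linarith⟩
        obtain ⟨z, hz, hz0⟩ := intermediate_value_Icc hle hcont hmem
        exact hne z (hconv y₂ y hy₂S hyS hz) (by linarith [sub_eq_zero.1 hz0])

lemma iterate_escape_down {g : ℝ → ℝ} (hc : Continuous g) {x q : ℝ} (hqx : q ≤ x)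
    (hlt : ∀ y, y ∈ Icc q x → g y < y) : ∃ n : ℕ, g^[n] x < q := by
  set G : ℝ → ℝ := fun y => -(g (-y)) with hG
  have hGc : Continuous G := (hc.comp continuous_neg).neg
  have hGgt : ∀ y, y ∈ Icc (-x) (-q) → y < G y := by
    intro y hy
    have : g (-y) < -y := hlt (-y) ⟨by linarith [hy.2], by linarith [hy.1]⟩
    simp only [hG]
    linarith
  obtain ⟨n, hn⟩ := iterate_escape hGc (by linarith : -x ≤ -q) hGgt
  refine ⟨n, ?_⟩
  have hiter : ∀ (k : ℕ) (y : ℝ), G^[k] (-y) = -(g^[k] y) := by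
    intro k
    induction k with
    | zero => simp
    | succ m ih =>
      intro y
      rw [Function.iterate_succ_apply, Function.iterate_succ_apply]
      have : G (-y) = -(g y) := by simp [hG]
      rw [this, ih]
  have := hiter n x
  rw [this] at hn
  linarith

lemma la_const_sub {u : ℝ → ℝ} {x c : ℝ} (hu : IsLocallyAffineAt u x) :
    IsLocallyAffineAt (fun y => c - u y) x := by
  obtain ⟨a, b, hab⟩ := hu
  exact ⟨-a, c - b, hab.mono fun y hy => by show c - u y = -a * y + (c - b); rw [hy]; ring⟩

lemma noFix_involution (f : Equiv.Perm ℝ) (hf : InPL f) (hfm : StrictMono ⇑f)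
    (hgt : ∀ y : ℝ, y < f y) :
    ∃ σ : Equiv.Perm ℝ, InPL σ ∧ σ * σ = 1 ∧ σ * f * σ = f⁻¹ := by
  have hfc : Continuous ⇑f := hf.1.1
  have hfsm := strictMono_perm_symm hfm
  set c := f 0 with hcdef
  have hc0 : 0 < c := hgt 0
  set orb : ℤ → ℝ := fun n => (f^n : Equiv.Perm ℝ) 0 with horb
  have horb0 : orb 0 = 0 := by simp [horb]
  have horb1 : orb 1 = c := by simp [horb, hcdef]
  have hadd : ∀ (j k : ℤ) (y : ℝ), (f^(j+k) : Equiv.Perm ℝ) y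
      = (f^j : Equiv.Perm ℝ) ((f^k : Equiv.Perm ℝ) y) := by
    intro j k y
    rw [zpow_add]
    rfl
  have hshift : ∀ (k m : ℤ), (f^k : Equiv.Perm ℝ) (orb m) = orb (k + m) := by
    intro k m
    exact (hadd k m 0).symm
  have horb_succ : ∀ n : ℤ, orb (n+1) = f (orb n) := by
    intro n
    have h1 : orb (1 + n) = (f^(1:ℤ) : Equiv.Perm ℝ) (orb n) := (hshift 1 n).symm
    rw [add_comm] at h1
    simpa using h1
  have hzmono : ∀ k : ℤ, StrictMono ⇑(f^k : Equiv.Perm ℝ) := by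
    intro k
    induction k using Int.induction_on with
    | zero => simpa using strictMono_id
    | succ m ih =>
      have hcoe : ⇑(f^((m:ℤ)+1) : Equiv.Perm ℝ) = ⇑(f^(m:ℤ) : Equiv.Perm ℝ) ∘ ⇑f := by
        funext y
        rw [hadd m 1 y]
        simp
      rw [hcoe]
      exact ih.comp hfm
    | pred m ih =>
      have hcoe : ⇑(f^(-(m:ℤ)-1) : Equiv.Perm ℝ) = ⇑(f^(-(m:ℤ)) : Equiv.Perm ℝ) ∘ ⇑f.symm := by
        funext y
        rw [show -(m:ℤ)-1 = -(m:ℤ) + (-1) from by ring, hadd (-(m:ℤ)) (-1) y]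
        simp [zpow_neg_one]
      rw [hcoe]
      exact ih.comp hfsm
  have horbmono : StrictMono orb := by
    apply strictMono_int_of_lt_succ
    intro n
    rw [horb_succ n]
    exact hgt (orb n)
  -- unboundedness of the orbit
  have hiter_up : ∀ k : ℕ, (⇑f)^[k] 0 = orb (k : ℤ) := by
    intro k
    induction k with
    | zero => simpa using horb0.symm
    | succ m ih =>
      rw [Function.iterate_succ_apply', ih, ← horb_succ]
      push_cast
      ring_nf
  have hsymm_lt : ∀ y : ℝ, f.symm y < y := by
    intro y
    have := hgt (f.symm y)
    rwa [f.apply_symm_apply] at this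
  have hiter_down : ∀ k : ℕ, (⇑f.symm)^[k] 0 = orb (-(k:ℤ)) := by
    intro k
    induction k with
    | zero => simpa using horb0.symm
    | succ m ih =>
      rw [Function.iterate_succ_apply', ih]
      have h1 : orb (-(m:ℤ)) = f (orb (-(m:ℤ)-1)) := by
        rw [show -(m:ℤ) = (-(m:ℤ)-1) + 1 from by ring, horb_succ]
        ring_nf
      rw [h1, Equiv.symm_apply_apply]
      congr 1
      push_cast
      ring
  have hup : ∀ x : ℝ, ∃ n : ℤ, x < orb n := by
    intro x
    rcases le_or_gt 0 x with h0 | h0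
    · obtain ⟨n, hn⟩ := iterate_escape hfc h0 (fun y _ => hgt y)
      exact ⟨(n : ℤ), by rwa [hiter_up n] at hn⟩
    · exact ⟨0, by rwa [horb0]⟩
  have hdown : ∀ x : ℝ, ∃ n : ℤ, orb n < x := by
    intro x
    rcases le_or_gt x 0 with h0 | h0
    · obtain ⟨n, hn⟩ := iterate_escape_down hf.1.2 h0 (fun y _ => hsymm_lt y)
      exact ⟨-(n:ℤ), by rwa [hiter_down n] at hn⟩
    · exact ⟨0, by rwa [horb0]⟩
  -- block decomposition
  have hex : ∀ x : ℝ, ∃ n : ℤ, orb n ≤ x ∧ x < orb (n+1) := by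
    intro x
    obtain ⟨m, hm⟩ := hup x
    obtain ⟨n₀, hn₀⟩ := hdown x
    have hbdd : ∃ b : ℤ, ∀ z : ℤ, z ∈ {n : ℤ | orb n ≤ x} → z ≤ b := by
      refine ⟨m, fun z hz => ?_⟩
      have : orb z < orb m := lt_of_le_of_lt hz hm
      exact (horbmono.lt_iff_lt.1 this).le
    obtain ⟨n, hn1, hn2⟩ := Int.exists_greatest_of_bdd hbdd ⟨n₀, hn₀.le⟩
    refine ⟨n, hn1, ?_⟩
    by_contra hcon
    push_neg at hcon
    exact absurd (hn2 (n+1) hcon) (by omega)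
  choose N hN1 hN2 using hex
  have hNuniq : ∀ (x : ℝ) (n : ℤ), orb n ≤ x → x < orb (n+1) → N x = n := by
    intro x n h1 h2
    have a1 := hN1 x
    have a2 := hN2 x
    by_contra hne
    rcases lt_or_gt_of_ne hne with hlt | hlt
    · have h3 : orb (N x + 1) ≤ orb n := horbmono.monotone (by omega)
      linarith
    · have h3 : orb (n + 1) ≤ orb (N x) := horbmono.monotone (by omega)
      linarith
  set s : ℝ → ℝ :=
    fun x => (f^(-(N x + 1)) : Equiv.Perm ℝ) (c - (f^(-(N x)) : Equiv.Perm ℝ) x) with hs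
  have hform : ∀ (n : ℤ) (x : ℝ), orb n ≤ x → x < orb (n+1) →
      s x = (f^(-(n+1)) : Equiv.Perm ℝ) (c - (f^(-n) : Equiv.Perm ℝ) x) := by
    intro n x h1 h2
    rw [hs]
    simp only
    rw [hNuniq x n h1 h2]
  have hcancel : ∀ (k : ℤ) (y : ℝ), (f^(-k) : Equiv.Perm ℝ) ((f^k : Equiv.Perm ℝ) y) = y := by
    intro k y
    have := (hadd (-k) k y).symm
    simpa using this
  have hcoordmem : ∀ (n : ℤ) (x : ℝ), orb n ≤ x → x < orb (n+1) →
      (0 ≤ (f^(-n) : Equiv.Perm ℝ) x ∧ (f^(-n) : Equiv.Perm ℝ) x < c) := by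
    intro n x h1 h2
    constructor
    · have := (hzmono (-n)).monotone h1
      rwa [hshift (-n) n, show -n + n = 0 from by ring, horb0] at this
    · have := (hzmono (-n)) h2
      rwa [hshift (-n) (n+1), show -n + (n+1) = 1 from by ring, horb1] at this
  have hxrec : ∀ (n : ℤ) (x : ℝ), (f^(n) : Equiv.Perm ℝ) ((f^(-n) : Equiv.Perm ℝ) x) = x := by
    intro n x
    have := (hadd n (-n) x).symm
    simpa using this
  -- block location of s x
  have hsmem : ∀ (n : ℤ) (x : ℝ), orb n ≤ x → x < orb (n+1) →
      orb (-(n+1)) < s x ∧ s x ≤ orb (-n) := by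
    intro n x h1 h2
    obtain ⟨he0, hec⟩ := hcoordmem n x h1 h2
    rw [hform n x h1 h2]
    constructor
    · have h3 : (0:ℝ) < c - (f^(-n) : Equiv.Perm ℝ) x := by linarith
      have := hzmono (-(n+1)) h3
      rwa [show (f^(-(n+1)) : Equiv.Perm ℝ) 0 = orb (-(n+1)) from by rw [← horb0, hshift, add_zero]] at this
    · have h3 : c - (f^(-n) : Equiv.Perm ℝ) x ≤ c := by linarith
      have := (hzmono (-(n+1))).monotone h3
      rwa [show (f^(-(n+1)) : Equiv.Perm ℝ) c = orb (-n) from by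
        rw [← horb1, hshift, show -(n+1) + 1 = -n from by ring]] at this
  -- involutivity
  have hinv : Function.Involutive s := by
    intro x
    have h1 : orb (N x) ≤ x := hN1 x
    have h2 : x < orb (N x + 1) := hN2 x
    set n := N x with hn
    obtain ⟨he0, hec⟩ := hcoordmem n x h1 h2
    set e := (f^(-n) : Equiv.Perm ℝ) x with he
    have hx_e : (f^n : Equiv.Perm ℝ) e = x := hxrec n x
    have hsx : s x = (f^(-(n+1)) : Equiv.Perm ℝ) (c - e) := hform n x h1 h2
    rcases eq_or_lt_of_le he0 with heq | hpos
    · -- e = 0 and x = orb n, s x = orb (-n)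
      have hxn : x = orb n := by
        rw [← hx_e, ← heq, ← horb0, hshift, add_zero]
      have hsxv : s x = orb (-n) := by
        rw [hsx, ← heq, sub_zero, ← horb1, hshift, show -(n+1) + 1 = -n from by ring]
      have hb1 : orb (-n) ≤ s x := le_of_eq hsxv.symm
      have hb2 : s x < orb (-n + 1) := by
        rw [hsxv]
        exact horbmono (by omega)
      rw [hform (-n) (s x) hb1 hb2, hsxv]
      rw [show (f^(-(-n)) : Equiv.Perm ℝ) (orb (-n)) = orb 0 from by
        rw [hshift, show -(-n) + -n = 0 from by ring], horb0, sub_zero,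
        show c = orb 1 from horb1.symm, hshift, show -(-n+1) + 1 = n from by ring]
      exact hxn.symm
    · -- e > 0
      have hb1 : orb (-(n+1)) < s x := (hsmem n x h1 h2).1
      have hb2 : s x < orb (-n) := by
        rw [hsx]
        have h3 : c - e < c := by linarith
        have := hzmono (-(n+1)) h3
        rwa [show (f^(-(n+1)) : Equiv.Perm ℝ) c = orb (-n) from by
          rw [← horb1, hshift, show -(n+1) + 1 = -n from by ring]] at this
      rw [hform (-(n+1)) (s x) hb1.le (by rw [show -(n+1)+1 = -n from by ring]; exact hb2), hsx]
      rw [show (f^(-(-(n+1))) : Equiv.Perm ℝ) ((f^(-(n+1)) : Equiv.Perm ℝ) (c - e)) = c - e from by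
        rw [show -(-(n+1)) = n+1 from by ring]; exact hxrec (n+1) (c-e)]
      rw [show c - (c - e) = e from by ring, show -(-(n+1)+1) = n from by ring]
      exact hx_e
  -- conjugation
  have hcnj : ∀ x : ℝ, s (f (s x)) = f.symm x := by
    intro x
    have h1 : orb (N x) ≤ x := hN1 x
    have h2 : x < orb (N x + 1) := hN2 x
    set n := N x with hn
    obtain ⟨he0, hec⟩ := hcoordmem n x h1 h2
    set e := (f^(-n) : Equiv.Perm ℝ) x with he
    have hx_e : (f^n : Equiv.Perm ℝ) e = x := hxrec n x
    have hsx : s x = (f^(-(n+1)) : Equiv.Perm ℝ) (c - e) := hform n x h1 h2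
    have hz : f (s x) = (f^(-n) : Equiv.Perm ℝ) (c - e) := by
      rw [hsx]
      have := (hadd 1 (-(n+1)) (c - e)).symm
      simp only [zpow_one] at this
      rw [this, show (1 : ℤ) + -(n+1) = -n from by ring]
    rcases eq_or_lt_of_le he0 with heq | hpos
    · -- e = 0 : x = orb n, f (s x) = orb (-n + 1)
      have hxn : x = orb n := by
        rw [← hx_e, ← heq, ← horb0, hshift, add_zero]
      have hzv : f (s x) = orb (-n + 1) := by
        rw [hz, ← heq, sub_zero, ← horb1, hshift]
      rw [hform (-n+1) (f (s x)) (le_of_eq hzv.symm) (by rw [hzv]; exact horbmono (by omega)), hzv]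
      rw [show (f^(-(-n+1)) : Equiv.Perm ℝ) (orb (-n+1)) = orb 0 from by
        rw [hshift, show -(-n+1) + (-n+1) = 0 from by ring], horb0, sub_zero,
        show c = orb 1 from horb1.symm, hshift, show -(-n+1+1) + 1 = n - 1 from by ring]
      rw [hxn, show n = (n-1) + 1 from by ring, horb_succ, Equiv.symm_apply_apply]
      ring_nf
    · -- e > 0 : f (s x) lies in block -n
      have hzl : orb (-n) < f (s x) := by
        rw [hz]
        have h3 : (0:ℝ) < c - e := by linarith
        have := hzmono (-n) h3
        rwa [show (f^(-n) : Equiv.Perm ℝ) 0 = orb (-n) from by rw [← horb0, hshift, add_zero]] at this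
      have hzu : f (s x) < orb (-n + 1) := by
        rw [hz]
        have h3 : c - e < c := by linarith
        have := hzmono (-n) h3
        rwa [show (f^(-n) : Equiv.Perm ℝ) c = orb (-n+1) from by rw [← horb1, hshift]] at this
      rw [hform (-n) (f (s x)) hzl.le hzu, hz]
      rw [show (f^(-(-n)) : Equiv.Perm ℝ) ((f^(-n) : Equiv.Perm ℝ) (c - e)) = c - e from by
        rw [show -(-n) = n from by ring]; exact hxrec n (c-e)]
      rw [show c - (c - e) = e from by ring]
      have := hadd (-(-n+1)) (-n) x
      rw [he, ← this, show -(-n+1) + -n = (-1 : ℤ) from by ring, zpow_neg_one]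
      rfl
  -- strict antitonicity
  have hanti : StrictAnti s := by
    intro x y hxy
    have hNle : N x ≤ N y := by
      have h1 : orb (N x) ≤ x := hN1 x
      have h2 : y < orb (N y + 1) := hN2 y
      have h3 : orb (N x) < orb (N y + 1) := by linarith
      have := horbmono.lt_iff_lt.1 h3
      omega
    rcases eq_or_lt_of_le hNle with hEq | hLt
    · rw [hform (N x) x (hN1 x) (hN2 x),
        hform (N x) y (by rw [hEq]; exact hN1 y) (by rw [hEq]; exact hN2 y)]
      apply hzmono (-(N x + 1))
      have := hzmono (-(N x)) hxy
      linarith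
    · have u1 := (hsmem (N x) x (hN1 x) (hN2 x)).1
      have u2 := (hsmem (N y) y (hN1 y) (hN2 y)).2
      have h3 : orb (-(N y)) ≤ orb (-(N x + 1)) := horbmono.monotone (by omega)
      linarith
  -- build σ
  set σ : Equiv.Perm ℝ := Function.Involutive.toPerm s hinv with hσdef
  have hσcoe : ⇑σ = s := rfl
  have hσsymmcoe : ⇑σ.symm = s := rfl
  have hscont : Continuous s := continuous_of_strictAnti_surj hanti hinv.surjective
  refine ⟨σ, ⟨⟨by rw [hσcoe]; exact hscont, by rw [hσsymmcoe]; exact hscont⟩, ?_⟩, ?_, ?_⟩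
  · -- no accumulation of non-affinity points
    show NAcc (NA s)
    apply nacc_of_locally
    intro x
    set m := N x with hm
    set G : ℤ → ℝ → ℝ := fun j y => (f^(-(j+1)) : Equiv.Perm ℝ) (c - (f^(-j) : Equiv.Perm ℝ) y)
      with hG
    have hEnacc : ∀ j : ℤ, NAcc (NA (G j)) := by
      intro j
      have hsub : NA (G j) ⊆ NA ⇑(f^(-j) : Equiv.Perm ℝ) ∪
          (fun y => c - (f^(-j) : Equiv.Perm ℝ) y) ⁻¹' (NA ⇑(f^(-(j+1)) : Equiv.Perm ℝ)) := by
        intro y hy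
        by_contra hmem
        simp only [mem_union, not_or, NA, mem_setOf_eq, not_not, mem_preimage] at hmem
        exact hy (la_comp hmem.2 (la_const_sub hmem.1))
      apply nacc_mono hsub
      apply nacc_union
      · exact (inPL_zpow hf (-j)).2
      · apply nacc_preimage
        · exact continuous_const.sub (inPL_zpow hf (-j)).1.1
        · intro u v huv
          simp only at huv
          have : (f^(-j) : Equiv.Perm ℝ) u = (f^(-j) : Equiv.Perm ℝ) v := by linarith
          exact (Equiv.injective _) this
        · exact (inPL_zpow hf (-(j+1))).2
    have hUlo : orb (m-1) < x := lt_of_lt_of_le (horbmono (by omega)) (hN1 x)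
    have hUhi : x < orb (m+2) := lt_of_lt_of_le (hN2 x) (horbmono.monotone (by omega))
    refine ⟨Ioo (orb (m-1)) (orb (m+2)), Ioo_mem_nhds hUlo hUhi,
      {orb m} ∪ {orb (m+1)} ∪ (NA (G (m-1)) ∪ NA (G m) ∪ NA (G (m+1))), ?_, ?_⟩
    · exact nacc_union (nacc_union (nacc_singleton _) (nacc_singleton _))
        (nacc_union (nacc_union (hEnacc _) (hEnacc _)) (hEnacc _))
    · rintro y ⟨hyNA, hyU⟩
      have hblock : ∀ j : ℤ, orb j < y → y < orb (j+1) → y ∈ NA (G j) := by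
        intro j hj1 hj2
        by_contra hyG
        simp only [NA, mem_setOf_eq, not_not] at hyG
        apply hyNA
        have hev : ∀ᶠ z in nhds y, s z = G j z := by
          filter_upwards [Ioo_mem_nhds hj1 hj2] with z hz
          exact hform j z hz.1.le hz.2
        exact la_congr hev hyG
      rcases lt_trichotomy y (orb m) with hy1 | hy1 | hy1
      · exact Or.inr (Or.inl (Or.inl (hblock (m-1) hyU.1 (by rwa [show m-1+1 = m from by ring]))))
      · exact Or.inl (Or.inl (by simp [hy1]))
      · rcases lt_trichotomy y (orb (m+1)) with hy2 | hy2 | hy2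
        · exact Or.inr (Or.inl (Or.inr (hblock m hy1 hy2)))
        · exact Or.inl (Or.inr (by simp [hy2]))
        · exact Or.inr (Or.inr (hblock (m+1) hy2 (by rw [show m+1+1 = m+2 from by ring]; exact hyU.2)))
  · -- σ * σ = 1
    ext x
    simp only [Equiv.Perm.mul_apply, Equiv.Perm.one_apply, hσcoe]
    exact hinv x
  · -- σ * f * σ = f⁻¹
    ext x
    simp only [Equiv.Perm.mul_apply, hσcoe]
    exact hcnj x

lemma strictAnti_perm_symm {h : Equiv.Perm ℝ} (ha : StrictAnti ⇑h) :
    StrictAnti ⇑h.symm := by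
  intro x y hxy
  by_contra hle
  push_neg at hle
  have h2 := ha.antitone hle
  rw [h.apply_symm_apply, h.apply_symm_apply] at h2
  exact absurd hxy (not_lt.2 h2)

lemma fix_involution (f : Equiv.Perm ℝ) (hf : InPL f) (hfm : StrictMono ⇑f)
    (h : Equiv.Perm ℝ) (hPL : InPL h) (hanti : StrictAnti ⇑h)
    (hrel : ∀ x : ℝ, h (f x) = f.symm (h x)) (w₀ : ℝ) (hw₀ : f w₀ = w₀) :
    ∃ σ : Equiv.Perm ℝ, InPL σ ∧ σ * σ = 1 ∧ σ * f * σ = f⁻¹ := by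
  have hfc : Continuous ⇑f := hf.1.1
  have hfsc : Continuous ⇑f.symm := hf.1.2
  have hhc : Continuous ⇑h := hPL.1.1
  have hhsc : Continuous ⇑h.symm := hPL.1.2
  have hfsm := strictMono_perm_symm hfm
  have hantis := strictAnti_perm_symm hanti
  -- derived intertwining relations
  have hrel2 : ∀ x : ℝ, h (f.symm x) = f (h x) := by
    intro x
    have := hrel (f.symm x)
    rw [f.apply_symm_apply] at this
    rw [this, f.apply_symm_apply]
  have hrel3 : ∀ x : ℝ, h.symm (f x) = f.symm (h.symm x) := by
    intro x
    have := hrel2 (h.symm x)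
    rw [h.apply_symm_apply] at this
    rw [← this, h.symm_apply_apply]
  have hrel4 : ∀ x : ℝ, h.symm (f.symm x) = f (h.symm x) := by
    intro x
    have := hrel (h.symm x)
    rw [h.apply_symm_apply] at this
    rw [← this, h.symm_apply_apply]
  -- the fixed point of h
  obtain ⟨p, hp⟩ := exists_fixed_of_anti hhc hanti
  have hsymmp : h.symm p = p := by
    have := h.symm_apply_apply p
    rwa [hp] at this
  -- fixed points of f are permuted by h
  have hFh : ∀ w : ℝ, f w = w → f (h w) = h w := by
    intro w hw
    have hsw : f.symm w = w := by
      have := f.symm_apply_apply w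
      rwa [hw] at this
    rw [← hrel2 w, hsw]
  have hFhs : ∀ w : ℝ, f w = w → f (h.symm w) = h.symm w := by
    intro w hw
    have hsw : f.symm w = w := by
      have := f.symm_apply_apply w
      rwa [hw] at this
    rw [← hrel4 w, hsw]
  -- the two repair identities
  obtain ⟨K1, K2⟩ : (∀ w : ℝ, w < p → p ≤ f w → h (h w) = w) ∧
      (∀ w : ℝ, p ≤ w → f w ≤ p → h.symm (h.symm w) = w) := by
    by_cases hfp : f p = p
    · constructor
      · intro w h1 h2
        exact absurd (lt_of_le_of_lt h2 (hfp ▸ hfm h1)) (lt_irrefl _)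
      · intro w h1 h2
        have hwp : w = p := by
          rcases eq_or_lt_of_le h1 with he | hlt
          · exact he.symm
          · exact absurd (lt_of_le_of_lt h2 (hfp ▸ hfm hlt)) (lt_irrefl _)
        rw [hwp, hsymmp, hsymmp]
    · -- the central interval (b, a)
      set F : Set ℝ := {x : ℝ | f x = x} with hF
      have hFclosed : IsClosed F := isClosed_eq hfc continuous_id
      have hw₀p : w₀ ≠ p := fun he => hfp (he ▸ hw₀)
      have hpos : ∃ w, w ∈ F ∧ p < w := by
        rcases lt_or_gt_of_ne hw₀p with hlt | hgt
        · exact ⟨h w₀, hFh w₀ hw₀, by rw [← hp]; exact hanti hlt⟩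
        · exact ⟨w₀, hw₀, hgt⟩
      have hneg : ∃ w, w ∈ F ∧ w < p := by
        rcases lt_or_gt_of_ne hw₀p with hlt | hgt
        · exact ⟨w₀, hw₀, hlt⟩
        · exact ⟨h w₀, hFh w₀ hw₀, by rw [← hp]; exact hanti hgt⟩
      obtain ⟨wa, hwaF, hwap⟩ := hpos
      obtain ⟨wb, hwbF, hwbp⟩ := hneg
      set a : ℝ := sInf (F ∩ Ici p) with ha
      set b : ℝ := sSup (F ∩ Iic p) with hb
      have hamem : a ∈ F ∩ Ici p :=
        (hFclosed.inter isClosed_Ici).csInf_mem ⟨wa, hwaF, hwap.le⟩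
          ⟨p, fun y hy => hy.2⟩
      have hbmem : b ∈ F ∩ Iic p :=
        (hFclosed.inter isClosed_Iic).csSup_mem ⟨wb, hwbF, hwbp.le⟩
          ⟨p, fun y hy => hy.2⟩
      have haF : f a = a := hamem.1
      have hbF : f b = b := hbmem.1
      have hpa : p < a := lt_of_le_of_ne hamem.2 fun he => hfp (he ▸ haF)
      have hbp : b < p := lt_of_le_of_ne hbmem.2 fun he => hfp (he.symm ▸ hbF)
      have hamin : ∀ z, z ∈ F → p ≤ z → a ≤ z := fun z h1 h2 =>
        csInf_le ⟨p, fun y hy => hy.2⟩ ⟨h1, h2⟩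
      have hbmax : ∀ z, z ∈ F → z ≤ p → z ≤ b := fun z h1 h2 =>
        le_csSup ⟨p, fun y hy => hy.2⟩ ⟨h1, h2⟩
      have hfsa : f.symm a = a := by
        have := f.symm_apply_apply a; rwa [haF] at this
      have hfsb : f.symm b = b := by
        have := f.symm_apply_apply b; rwa [hbF] at this
      -- h swaps a and b
      have hab : h a = b := by
        have h1 : h a ≤ b := hbmax _ (hFh a haF) (by rw [← hp]; exact (hanti hpa).le)
        have h2 : a ≤ h.symm b := hamin _ (hFhs b hbF) (by rw [← hsymmp]; exact (hantis hbp).le)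
        have h3 : h (h.symm b) ≤ h a := hanti.antitone h2
        rw [h.apply_symm_apply] at h3
        linarith
      have hba : h b = a := by
        have h1 : a ≤ h b := hamin _ (hFh b hbF) (by rw [← hp]; exact (hanti hbp).le)
        have h2 : h.symm a ≤ b := hbmax _ (hFhs a haF) (by rw [← hsymmp]; exact (hantis hpa).le)
        have h3 : h b ≤ h (h.symm a) := hanti.antitone h2
        rw [h.apply_symm_apply] at h3
        linarith
      have hsab : h.symm a = b := by
        have := congrArg (⇑h.symm) hba
        rw [h.symm_apply_apply] at this
        exact this.symm
      have hsba : h.symm b = a := by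
        have := congrArg (⇑h.symm) hab
        rw [h.symm_apply_apply] at this
        exact this.symm
      -- no fixed points inside (b, a)
      have hgapF : ∀ y, y ∈ Ioo b a → f y ≠ y := by
        intro y hy hfy
        rcases le_or_gt p y with hpy | hpy
        · exact absurd (hamin y hfy hpy) (not_le.2 hy.2)
        · exact absurd (hbmax y hfy hpy.le) (not_le.2 hy.1)
      -- invariance of (b, a)
      have hIh : ∀ y, y ∈ Ioo b a → h y ∈ Ioo b a := fun y hy =>
        ⟨hab ▸ hanti hy.2, hba ▸ hanti hy.1⟩
      have hIhs : ∀ y, y ∈ Ioo b a → h.symm y ∈ Ioo b a := fun y hy =>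
        ⟨hsab ▸ hantis hy.2, hsba ▸ hantis hy.1⟩
      have hpI : p ∈ Ioo b a := ⟨hbp, hpa⟩
      -- commutation of h ∘ h with f and f.symm
      have hcomm : ∀ y : ℝ, h (h (f y)) = f (h (h y)) := by
        intro y
        rw [hrel y, hrel2 (h y)]
      have hcomm_s : ∀ y : ℝ, h (h (f.symm y)) = f.symm (h (h y)) := by
        intro y
        rw [hrel2 y, hrel (h y)]
      -- the key identity : h ∘ h = id on (b, a)
      have main : ∀ (G : ℝ → ℝ), Continuous G → StrictMono G → G a = a → G b = b →
          (∀ y, y ∈ Ioo b a → y < G y) → (∀ y : ℝ, h (h (G y)) = G (h (h y))) →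
          ∀ w, w ∈ Ioo b a → h (h w) = w := by
        intro G hGc hGm hGa hGb hGgt hGcomm
        have hGI : ∀ y, y ∈ Ioo b a → G y ∈ Ioo b a := fun y hy =>
          ⟨hGb ▸ hGm hy.1, hGa ▸ hGm hy.2⟩
        have hGiter : ∀ (k : ℕ) (y : ℝ), y ∈ Ioo b a → G^[k] y ∈ Ioo b a := by
          intro k
          induction k with
          | zero => intro y hy; simpa using hy
          | succ m ih =>
            intro y hy
            rw [Function.iterate_succ_apply']
            exact hGI _ (ih y hy)
        have hGcommiter : ∀ (k : ℕ) (y : ℝ), h (h (G^[k] y)) = G^[k] (h (h y)) := by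
          intro k
          induction k with
          | zero => intro y; simp
          | succ m ih =>
            intro y
            rw [Function.iterate_succ_apply', Function.iterate_succ_apply', hGcomm, ih]
        -- affine zone for h ∘ h near a
        obtain ⟨q₁, hq₁a, hq₁⟩ := exists_zone_left (hPL.2 a)
        obtain ⟨r₁, hbr₁, hr₁⟩ := exists_zone_right (hPL.2 b)
        set r : ℝ := min r₁ p with hr
        have hbr : b < r := lt_min hbr₁ hbp
        have hrp : r ≤ p := min_le_right _ _
        have hra : r < a := lt_of_le_of_lt hrp hpa
        set q : ℝ := max (max q₁ p) (h.symm r) with hq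
        have hqa : q < a := by
          apply max_lt (max_lt hq₁a hpa)
          rw [← hsba]
          exact hantis hbr
        have hpq : p ≤ q := le_max_of_le_left (le_max_right _ _)
        have hbq : b < q := lt_of_lt_of_le hbp hpq
        have hhla : ∀ y, y ∈ Ioo q a → IsLocallyAffineAt (fun z => h (h z)) y := by
          intro y hy
          have hy1 : IsLocallyAffineAt (⇑h) y := by
            by_contra hc
            have : y ∈ Ioo q₁ a ∩ {z : ℝ | ¬ IsLocallyAffineAt (⇑h) z} :=
              ⟨⟨lt_of_le_of_lt (le_max_of_le_left (le_max_left _ _)) hy.1, hy.2⟩, hc⟩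
            rw [hq₁] at this
            exact this
          have hy2 : IsLocallyAffineAt (⇑h) (h y) := by
            by_contra hc
            have hm1 : b < h y := by rw [← hab]; exact hanti hy.2
            have hm2 : h y < r := by
              have : h.symm r < y := lt_of_le_of_lt (le_max_right _ _) hy.1
              have := hanti this
              rwa [h.apply_symm_apply] at this
            have : h y ∈ Ioo b r₁ ∩ {z : ℝ | ¬ IsLocallyAffineAt (⇑h) z} :=
              ⟨⟨hm1, lt_of_lt_of_le hm2 (min_le_left _ _)⟩, hc⟩
            rw [hr₁] at this
            exact this
          exact la_comp hy2 hy1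
        obtain ⟨A, B, hAB⟩ := affine_on_Ioo hqa hhla
        -- two fixed points of h ∘ h in the zone
        have hpqIcc : Icc p q ⊆ Ioo b a := fun z hz => ⟨lt_of_lt_of_le hbp hz.1, lt_of_le_of_lt hz.2 hqa⟩
        obtain ⟨n, hn⟩ := iterate_escape hGc hpq (fun y hy => hGgt y (hpqIcc hy))
        set w₁ : ℝ := G^[n] p with hw₁
        have hw₁I : w₁ ∈ Ioo b a := hGiter n p hpI
        have hw₁qa : w₁ ∈ Ioo q a := ⟨hn, hw₁I.2⟩
        have hhp : h (h p) = p := by rw [hp, hp]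
        have hfix₁ : h (h w₁) = w₁ := by
          rw [hw₁, hGcommiter n p, hhp]
        set w₂ : ℝ := G w₁ with hw₂
        have hw₂I : w₂ ∈ Ioo b a := hGI _ hw₁I
        have hw₁₂ : w₁ < w₂ := hGgt _ hw₁I
        have hw₂qa : w₂ ∈ Ioo q a := ⟨lt_trans hn hw₁₂, hw₂I.2⟩
        have hfix₂ : h (h w₂) = w₂ := by
          rw [hw₂, hGcomm w₁, hfix₁]
        have hA1 : A = 1 := by
          have e1 : A * w₁ + B = w₁ := by rw [← hAB w₁ hw₁qa]; exact hfix₁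
          have e2 : A * w₂ + B = w₂ := by rw [← hAB w₂ hw₂qa]; exact hfix₂
          have : (A - 1) * (w₂ - w₁) = 0 := by ring_nf; linarith
          rcases mul_eq_zero.1 this with hc | hc
          · linarith
          · linarith
        have hB0 : B = 0 := by
          have e1 : A * w₁ + B = w₁ := by rw [← hAB w₁ hw₁qa]; exact hfix₁
          rw [hA1] at e1
          linarith
        have hzone : ∀ y, y ∈ Ioo q a → h (h y) = y := by
          intro y hy
          rw [hAB y hy, hA1, hB0]
          ring
        -- propagate to all of (b, a)
        intro w hwI
        rcases le_or_gt w q with hwq | hwq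
        · have hIcc : Icc w q ⊆ Ioo b a := fun z hz =>
            ⟨lt_of_lt_of_le hwI.1 hz.1, lt_of_le_of_lt hz.2 hqa⟩
          obtain ⟨m, hm⟩ := iterate_escape hGc hwq (fun y hy => hGgt y (hIcc hy))
          have hmI : G^[m] w ∈ Ioo b a := hGiter m w hwI
          have := hzone _ ⟨hm, hmI.2⟩
          rw [hGcommiter m w] at this
          exact hGm.injective.iterate m this
        · exact hzone w ⟨hwq, hwI.2⟩
      have hdich := sign_dichotomy (S := Ioo b a) hfc
        (fun x y hx hy z hz => ⟨lt_of_lt_of_le hx.1 hz.1, lt_of_le_of_lt hz.2 hy.2⟩) hgapF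
      have key : ∀ w, w ∈ Ioo b a → h (h w) = w := by
        rcases hdich with hup | hdn
        · exact main (⇑f) hfc hfm haF hbF hup hcomm
        · refine main (⇑f.symm) hfsc hfsm hfsa hfsb ?_ hcomm_s
          intro y hy
          have := hfsm (hdn y hy)
          rwa [f.symm_apply_apply] at this
      have key2 : ∀ w, w ∈ Ioo b a → h.symm (h.symm w) = w := by
        intro w hw
        have h2 : h.symm (h.symm w) ∈ Ioo b a := hIhs _ (hIhs _ hw)
        have := key _ h2
        rw [h.apply_symm_apply, h.apply_symm_apply] at this
        exact this.symm
      constructor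
      · intro w h1 h2
        refine key w ⟨?_, lt_trans h1 hpa⟩
        have : f b < f w := lt_of_le_of_lt (le_of_eq hbF) (lt_of_lt_of_le hbp h2)
        exact hfm.lt_iff_lt.1 this
      · intro w h1 h2
        refine key2 w ⟨lt_of_lt_of_le hbp h1, ?_⟩
        have : f w < f a := lt_of_le_of_lt h2 (by rw [haF]; exact hpa)
        exact hfm.lt_iff_lt.1 this
  -- the involution
  set s : ℝ → ℝ := fun x => if x ≤ p then h.symm x else h x with hs
  have hsval_le : ∀ x, x ≤ p → s x = h.symm x := fun x hx => if_pos hx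
  have hsval_gt : ∀ x, p < x → s x = h x := fun x hx => if_neg (not_le.2 hx)
  have hsp : s p = p := by rw [hsval_le p le_rfl, hsymmp]
  have hinv : Function.Involutive s := by
    intro x
    rcases lt_trichotomy x p with hx | hx | hx
    · have h1 : s x = h.symm x := hsval_le x hx.le
      have h2 : p < s x := by rw [h1, ← hsymmp]; exact hantis hx
      rw [hsval_gt _ h2, h1, h.apply_symm_apply]
    · rw [hx, hsp, hsp]
    · have h1 : s x = h x := hsval_gt x hx
      have h2 : s x < p := by rw [h1, ← hp]; exact hanti hx
      rw [hsval_le _ h2.le, h1, h.symm_apply_apply]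
  have hanti_s : StrictAnti s := by
    intro x y hxy
    rcases le_or_gt y p with hy | hy
    · rw [hsval_le x (hxy.le.trans hy), hsval_le y hy]
      exact hantis hxy
    · rw [hsval_gt y hy]
      rcases le_or_gt x p with hx | hx
      · rw [hsval_le x hx]
        calc h y < h p := hanti hy
        _ = p := hp
        _ ≤ h.symm x := by rw [← hsymmp]; exact hantis.antitone hx
      · rw [hsval_gt x hx]
        exact hanti hxy
  -- conjugation
  have hco : ∀ x : ℝ, s (f (s x)) = f.symm x := by
    intro x
    by_cases hx : x ≤ p
    · rw [hsval_le x hx]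
      have hz : f (h.symm x) = h.symm (f.symm x) := (hrel4 x).symm
      rw [hz]
      by_cases hzp : h.symm (f.symm x) ≤ p
      · rw [hsval_le _ hzp]
        have hwp : p ≤ f.symm x := by
          rw [← hsymmp] at hzp
          by_contra hcon
          push_neg at hcon
          exact absurd (hantis hcon) (not_lt.2 hzp)
        have hfw : f (f.symm x) ≤ p := by rw [f.apply_symm_apply]; exact hx
        exact K2 (f.symm x) hwp hfw
      · push_neg at hzp
        rw [hsval_gt _ hzp, h.apply_symm_apply]
    · push_neg at hx
      rw [hsval_gt x hx]
      have hz : f (h x) = h (f.symm x) := (hrel2 x).symm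
      rw [hz]
      by_cases hzp : h (f.symm x) ≤ p
      · rw [hsval_le _ hzp, h.symm_apply_apply]
      · push_neg at hzp
        rw [hsval_gt _ hzp]
        have hwp : f.symm x < p := by
          rw [← hp] at hzp
          by_contra hcon
          push_neg at hcon
          rcases eq_or_lt_of_le hcon with he | hlt
          · rw [← he] at hzp; exact absurd hzp (lt_irrefl _)
          · exact absurd (hanti hlt) (not_lt.2 hzp.le)
        have hfw : p ≤ f (f.symm x) := by rw [f.apply_symm_apply]; exact hx.le
        exact K1 (f.symm x) hwp hfw
  -- build σ
  set σ : Equiv.Perm ℝ := Function.Involutive.toPerm s hinv with hσdef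
  have hσcoe : ⇑σ = s := rfl
  have hσsymmcoe : ⇑σ.symm = s := rfl
  have hscont : Continuous s := by
    rw [hs]
    apply Continuous.if_le hhsc hhc continuous_id continuous_const
    intro x hx
    have hxp : x = p := hx
    rw [hxp, hsymmp, hp]
  refine ⟨σ, ⟨⟨by rw [hσcoe]; exact hscont, by rw [hσsymmcoe]; exact hscont⟩, ?_⟩, ?_, ?_⟩
  · show NAcc (NA s)
    have hsub : NA s ⊆ NA ⇑h.symm ∪ NA ⇑h ∪ {p} := by
      intro y hy
      by_contra hmem
      simp only [mem_union, not_or, NA, mem_setOf_eq, not_not, mem_singleton_iff] at hmem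
      obtain ⟨⟨hm1, hm2⟩, hm3⟩ := hmem
      apply hy
      rcases lt_trichotomy y p with hyp | hyp | hyp
      · have hev : ∀ᶠ z in nhds y, s z = h.symm z := by
          filter_upwards [Iio_mem_nhds hyp] with z hz
          exact hsval_le z (le_of_lt hz)
        exact la_congr hev hm1
      · exact absurd hyp hm3
      · have hev : ∀ᶠ z in nhds y, s z = h z := by
          filter_upwards [Ioi_mem_nhds hyp] with z hz
          exact hsval_gt z hz
        exact la_congr hev hm2
    apply nacc_mono hsub
    apply nacc_union (nacc_union ?_ hPL.2) (nacc_singleton p)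
    exact (inPL_inv hPL).2
  · ext x
    simp only [Equiv.Perm.mul_apply, Equiv.Perm.one_apply, hσcoe]
    exact hinv x
  · ext x
    simp only [Equiv.Perm.mul_apply, hσcoe]
    exact hco x

/-- A strictly increasing element of PL(ℝ) is strongly reversible in PL(ℝ) iff it is
reversed by a strictly decreasing element of PL(ℝ). -/
theorem stmt_7 (f : Equiv.Perm ℝ) (hf : InPL f) (hfm : StrictMono (⇑f)) :
    (∃ σ : Equiv.Perm ℝ, InPL σ ∧ σ * σ = 1 ∧ σ * f * σ = f⁻¹) ↔
    (∃ h : Equiv.Perm ℝ, InPL h ∧ StrictAnti (⇑h) ∧ h * f * h⁻¹ = f⁻¹) := by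
  constructor
  · exact stmt_7_forward f hf hfm
  · rintro ⟨h, hPL, hanti, hconj⟩
    have hrel : ∀ x : ℝ, h (f x) = f.symm (h x) := by
      intro x
      have := Equiv.congr_fun hconj (h x)
      simp only [Equiv.Perm.mul_apply] at this
      rw [show h⁻¹ (h x) = x from h.symm_apply_apply x] at this
      exact this
    by_cases hFix : ∃ w : ℝ, f w = w
    · obtain ⟨w₀, hw₀⟩ := hFix
      exact fix_involution f hf hfm h hPL hanti hrel w₀ hw₀
    · push_neg at hFix
      have hdich := sign_dichotomy (S := (univ : Set ℝ)) hf.1.1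
        (fun x y _ _ z _ => mem_univ z) (fun y _ => hFix y)
      rcases hdich with hup | hdn
      · exact noFix_involution f hf hfm (fun y => hup y (mem_univ y))
      · have hfsm := strictMono_perm_symm hfm
        have hgt' : ∀ y : ℝ, y < f⁻¹ y := by
          intro y
          have := hfsm (hdn y (mem_univ y))
          rw [f.symm_apply_apply] at this
          exact this
        obtain ⟨σ, hσPL, hσ2, hσc⟩ := noFix_involution f⁻¹ (inPL_inv hf) hfsm hgt'
        refine ⟨σ, hσPL, hσ2, ?_⟩
        have hσinv : σ⁻¹ = σ := inv_eq_of_mul_eq_one_right hσ2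
        have := congrArg (fun g : Equiv.Perm ℝ => g⁻¹) hσc
        simp only [mul_inv_rev, hσinv, inv_inv] at this
        rw [← this]
        group
end

section
/- Let f be a strictly increasing homeomorphism of ℝ. Then there exists a strictly decreasing homeomorphism τ of ℝ with τ ∘ τ = id and τ ∘ f ∘ τ = f if and only if there exists a strictly decreasing homeomorphism g of ℝ with g ∘ g = f. -/
lemma fix_of_anti (c : ℝ → ℝ) (ha : StrictAnti c) (hc : Continuous c) : ∃ p, c p = p := by
  set φ : ℝ → ℝ := fun x => c x - x with hφ
  have hφc : Continuous φ := hc.sub continuous_id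
  rcases lt_trichotomy (c 0) 0 with h | h | h
  · have h1 : φ 0 ≤ 0 := by simp [φ, h.le]
    have h2 : 0 ≤ φ (c 0) := by
      have := ha h
      simp [φ]; linarith
    obtain ⟨p, _, hp⟩ := intermediate_value_Icc' h.le hφc.continuousOn
      (Set.mem_Icc.mpr ⟨h1, h2⟩)
    exact ⟨p, by simpa [φ, sub_eq_zero] using hp⟩
  · exact ⟨0, h⟩
  · have h1 : 0 ≤ φ 0 := by simp [φ, h.le]
    have h2 : φ (c 0) ≤ 0 := by
      have := ha h
      simp [φ]; linarith
    obtain ⟨p, _, hp⟩ := intermediate_value_Icc' (le_of_lt h) hφc.continuousOn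
      (Set.mem_Icc.mpr ⟨h2, h1⟩)
    exact ⟨p, by simpa [φ, sub_eq_zero] using hp⟩

lemma glue_perm (c : ℝ → ℝ) (ha : StrictAnti c)
    (hs : Function.Surjective c) : ∃ τ : Equiv.Perm ℝ, ⇑τ = c ∧ IsHomeo τ := by
  have hm : StrictMono (fun x => -(c x)) := fun x y h => neg_lt_neg (ha h)
  have hs' : Function.Surjective (fun x => -(c x)) := fun y => by
    obtain ⟨x, hx⟩ := hs (-y); exact ⟨x, by simp [hx]⟩
  let e := StrictMono.orderIsoOfSurjective _ hm hs'
  have hcoe : ⇑e = fun x => -(c x) := rfl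
  let h := e.toHomeomorph
  refine ⟨e.toEquiv.trans (Equiv.neg ℝ), ?_, ?_, ?_⟩
  · funext x; simp [hcoe]
  · show Continuous fun x => (Equiv.neg ℝ) (e x)
    exact continuous_neg.comp h.continuous
  · show Continuous fun y => e.symm ((Equiv.neg ℝ).symm y)
    exact h.symm.continuous.comp continuous_neg

/-- For a strictly increasing homeomorphism f of ℝ, there is a strictly decreasing
involution commuting with f iff f has a strictly decreasing square root. -/
theorem stmt_8 (f : Equiv.Perm ℝ) (hf : IsHomeo f) (hfm : StrictMono (⇑f)) :
    (∃ τ : Equiv.Perm ℝ, IsHomeo τ ∧ StrictAnti (⇑τ) ∧ τ * τ = 1 ∧ τ * f * τ = f) ↔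
    (∃ g : Equiv.Perm ℝ, IsHomeo g ∧ StrictAnti (⇑g) ∧ g * g = f) := by
  constructor
  · rintro ⟨τ, hτh, hτa, hτ2, hτc⟩
    have hτ2' : ∀ x, τ (τ x) = x := fun x => by
      have := Equiv.ext_iff.mp hτ2 x; simpa using this
    have hτc' : ∀ x, τ (f (τ x)) = f x := fun x => by
      have := Equiv.ext_iff.mp hτc x; simpa using this
    have comm : ∀ x, τ (f x) = f (τ x) := fun x => by
      have := hτc' (τ x); rwa [hτ2' x] at this
    obtain ⟨p, hp⟩ := fix_of_anti _ hτa hτh.1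
    have hfp : f p = p := by
      have hfix : τ (f p) = f p := by rw [comm, hp]
      rcases lt_trichotomy (f p) p with h | h | h
      · have := hτa h; rw [hfix, hp] at this; linarith
      · exact h
      · have := hτa h; rw [hfix, hp] at this; linarith
    set c : ℝ → ℝ := fun x => if x ≤ p then f (τ x) else τ x with hc
    -- key inequalities
    have key1 : ∀ x, x ≤ p → p ≤ f (τ x) := fun x hx => by
      have h1 : p ≤ τ x := hp ▸ hτa.antitone hx
      calc p = f p := hfp.symm
        _ ≤ f (τ x) := hfm.monotone h1
    have ha : StrictAnti c := by
      intro x y hxy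
      by_cases hx : x ≤ p <;> by_cases hy : y ≤ p <;> simp only [c, if_pos, if_neg, hx, hy,
        if_true, if_false]
      · exact hfm (hτa hxy)
      · calc τ y < τ p := hτa (lt_of_not_ge hy)
          _ = p := hp
          _ ≤ f (τ x) := key1 x hx
      · exact absurd (hxy.le.trans hy) hx
      · exact hτa hxy
    have hcont : Continuous c := by
      apply Continuous.if_le (hf.1.comp hτh.1) hτh.1 continuous_id continuous_const
      intro x hx
      simp only [id] at hx; subst hx
      show f (τ x) = τ x
      rw [hp, hfp]
    have hsurj : Function.Surjective c := by
      intro y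
      by_cases hy : p ≤ y
      · refine ⟨τ (f.symm y), ?_⟩
        have h1 : p ≤ f.symm y := by
          rw [← hfm.le_iff_le]; rw [Equiv.apply_symm_apply, hfp]; exact hy
        have h2 : τ (f.symm y) ≤ p := hp ▸ hτa.antitone h1
        simp only [c, if_pos h2, hτ2', Equiv.apply_symm_apply]
      · refine ⟨τ y, ?_⟩
        have h2 : ¬ τ y ≤ p := by
          push_neg at hy ⊢
          calc p = τ p := hp.symm
            _ < τ y := hτa hy
        simp only [c, if_neg h2, hτ2']
    obtain ⟨g, hgc, hgh⟩ := glue_perm c ha hsurj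
    refine ⟨g, hgh, by rw [hgc]; exact ha, ?_⟩
    ext x
    show g (g x) = f x
    rw [hgc]
    by_cases hx : x ≤ p
    · rw [show c x = f (τ x) from if_pos hx]
      by_cases h2 : f (τ x) ≤ p
      · have he : f (τ x) = p := le_antisymm h2 (key1 x hx)
        have hτx : τ x = p := f.injective (by rw [he, hfp])
        have hxp : x = p := by rw [← hτ2' x, hτx, hp]
        rw [show c (f (τ x)) = f (τ (f (τ x))) from if_pos h2, hτc', hxp, hfp, hfp]
      · rw [show c (f (τ x)) = τ (f (τ x)) from if_neg h2, hτc']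
    · have h1 : τ x ≤ p := by
        push_neg at hx
        exact le_of_lt (hp ▸ hτa hx)
      rw [show c x = τ x from if_neg hx, show c (τ x) = f (τ (τ x)) from if_pos h1, hτ2']
  · rintro ⟨g, hgh, hga, hg2⟩
    have hg2' : ∀ x, g (g x) = f x := fun x => by
      have := Equiv.ext_iff.mp hg2 x; simpa using this
    have comm : ∀ x, g (f x) = f (g x) := fun x => by
      rw [← hg2' x, ← hg2' (g x)]
    have commInv : ∀ x, g.symm (f x) = f (g.symm x) := fun x => by
      have := comm (g.symm x)
      rw [Equiv.apply_symm_apply] at this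
      rw [← this, Equiv.symm_apply_apply]
    obtain ⟨p, hp⟩ := fix_of_anti _ hga hgh.1
    have hfp : f p = p := by rw [← hg2' p, hp, hp]
    have hps : g.symm p = p := g.injective (by rw [Equiv.apply_symm_apply, hp])
    have hgsa : StrictAnti (⇑g.symm) := by
      intro x y hxy
      rw [← hga.lt_iff_gt, Equiv.apply_symm_apply, Equiv.apply_symm_apply]
      exact hxy
    set c : ℝ → ℝ := fun x => if x ≤ p then g.symm x else g x with hc
    have key1 : ∀ x, x ≤ p → p ≤ g.symm x := fun x hx => hps ▸ hgsa.antitone hx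
    have ha : StrictAnti c := by
      intro x y hxy
      by_cases hx : x ≤ p <;> by_cases hy : y ≤ p <;> simp only [c, if_pos, if_neg, hx, hy,
        if_true, if_false]
      · exact hgsa hxy
      · calc g y < g p := hga (lt_of_not_ge hy)
          _ = p := hp
          _ ≤ g.symm x := key1 x hx
      · exact absurd (hxy.le.trans hy) hx
      · exact hga hxy
    have hcont : Continuous c := by
      apply Continuous.if_le hgh.2 hgh.1 continuous_id continuous_const
      intro x hx
      simp only [id] at hx; subst hx
      rw [hp, hps]
    have hsurj : Function.Surjective c := by
      intro y
      by_cases hy : p ≤ y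
      · refine ⟨g y, ?_⟩
        have h2 : g y ≤ p := hp ▸ hga.antitone hy
        simp only [c, if_pos h2, Equiv.symm_apply_apply]
      · refine ⟨g.symm y, ?_⟩
        have h2 : ¬ g.symm y ≤ p := by
          push_neg at hy ⊢
          calc p = g.symm p := hps.symm
            _ < g.symm y := hgsa hy
        simp only [c, if_neg h2, Equiv.apply_symm_apply]
    obtain ⟨τ, hτc, hτh⟩ := glue_perm c ha hsurj
    refine ⟨τ, hτh, by rw [hτc]; exact ha, ?_, ?_⟩
    · ext x
      show τ (τ x) = (1 : Equiv.Perm ℝ) x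
      rw [hτc, Equiv.Perm.one_apply]
      by_cases hx : x ≤ p
      · rw [show c x = g.symm x from if_pos hx]
        by_cases h2 : g.symm x ≤ p
        · have he : g.symm x = p := le_antisymm h2 (key1 x hx)
          have hxp : x = p := by rw [← Equiv.apply_symm_apply g x, he, hp]
          rw [show c (g.symm x) = g.symm (g.symm x) from if_pos h2, he, hps, hxp]
        · rw [show c (g.symm x) = g (g.symm x) from if_neg h2, Equiv.apply_symm_apply]
      · have h1 : g x ≤ p := by
          push_neg at hx
          exact le_of_lt (hp ▸ hga hx)
        rw [show c x = g x from if_neg hx, show c (g x) = g.symm (g x) from if_pos h1,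
          Equiv.symm_apply_apply]
    · ext x
      show τ (f (τ x)) = f x
      rw [hτc]
      by_cases hx : x ≤ p
      · rw [show c x = g.symm x from if_pos hx]
        have h1 : p ≤ f (g.symm x) := by
          calc p = f p := hfp.symm
            _ ≤ f (g.symm x) := hfm.monotone (key1 x hx)
        by_cases h2 : f (g.symm x) ≤ p
        · have he : f (g.symm x) = p := le_antisymm h2 h1
          have hgs : g.symm x = p := hfm.injective (by rw [he, hfp])
          have hxp : x = p := by rw [← Equiv.apply_symm_apply g x, hgs, hp]
          rw [show c (f (g.symm x)) = g.symm (f (g.symm x)) from if_pos h2, he, hps, hxp, hfp]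
        · rw [show c (f (g.symm x)) = g (f (g.symm x)) from if_neg h2, comm,
            Equiv.apply_symm_apply]
      · push_neg at hx
        have h1 : g x < p := hp ▸ hga hx
        have h2 : f (g x) ≤ p := by
          calc f (g x) ≤ f p := hfm.monotone h1.le
            _ = p := hfp
        rw [show c x = g x from if_neg (not_le.mpr hx),
          show c (f (g x)) = g.symm (f (g x)) from if_pos h2, commInv, Equiv.symm_apply_apply]
end

section
/- Every strictly decreasing homeomorphism of ℝ can be written as a composite of three involutions among the homeomorphisms of ℝ, and every homeomorphism of ℝ can be written as a composite of four involutions among the homeomorphisms of ℝ. (In other words, H⁻(ℝ) ⊆ I₃(H(ℝ)) and H(ℝ) = I₄(H(ℝ)).) -/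
open Filter Function

namespace Stmt9


lemma cont_of_sm (g : ℝ → ℝ) (h : StrictMono g) (hs : Surjective g) : Continuous g := by
  have : Continuous ⇑(StrictMono.orderIsoOfSurjective g h hs) :=
    (OrderIso.toHomeomorph (StrictMono.orderIsoOfSurjective g h hs)).continuous
  simpa [StrictMono.coe_orderIsoOfSurjective] using this

lemma cont_of_sa (g : ℝ → ℝ) (h : StrictAnti g) (hs : Surjective g) : Continuous g := by
  have h1 : StrictMono (fun x => g (-x)) := fun a b hab => h (by linarith)
  have h2 : Surjective (fun x => g (-x)) := fun y => by
    obtain ⟨x, hx⟩ := hs y; exact ⟨-x, by simpa using hx⟩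
  have := cont_of_sm _ h1 h2
  have : Continuous ((fun x => g (-x)) ∘ (fun x : ℝ => -x)) := this.comp continuous_neg
  simpa [Function.comp_def] using this

lemma symm_sm (q : Equiv.Perm ℝ) (h : StrictMono ⇑q) : StrictMono ⇑q.symm := by
  intro a b hab
  have := h.lt_iff_lt (a := q.symm a) (b := q.symm b)
  simpa using this.mp (by simpa using hab)

lemma symm_sa (q : Equiv.Perm ℝ) (h : StrictAnti ⇑q) : StrictAnti ⇑q.symm := by
  intro a b hab
  have := h.lt_iff_gt (a := q.symm a) (b := q.symm b)
  simpa using this.mp (by simpa using hab)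

lemma isHomeo_of_sm (q : Equiv.Perm ℝ) (h : StrictMono ⇑q) : IsHomeo q :=
  ⟨cont_of_sm _ h q.surjective, cont_of_sm _ (symm_sm q h) q.symm.surjective⟩

lemma isHomeo_of_sa (q : Equiv.Perm ℝ) (h : StrictAnti ⇑q) : IsHomeo q :=
  ⟨cont_of_sa _ h q.surjective, cont_of_sa _ (symm_sa q h) q.symm.surjective⟩

lemma isHomeo_mul {a b : Equiv.Perm ℝ} (ha : IsHomeo a) (hb : IsHomeo b) : IsHomeo (a * b) :=
  ⟨by simpa [Equiv.Perm.coe_mul] using ha.1.comp hb.1,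
   by
    have : ⇑(a * b).symm = ⇑b.symm ∘ ⇑a.symm := rfl
    rw [this]; exact hb.2.comp ha.2⟩

lemma isHomeo_inv {a : Equiv.Perm ℝ} (ha : IsHomeo a) : IsHomeo a⁻¹ := by
  constructor
  · have : ⇑a⁻¹ = ⇑a.symm := rfl
    rw [this]; exact ha.2
  · have : ⇑a⁻¹.symm = ⇑a := rfl
    rw [this]; exact ha.1

lemma isHomeo_one : IsHomeo 1 := ⟨by simpa using continuous_id, by simpa [Equiv.Perm.one_symm] using continuous_id⟩


section LemB
variable (k : Equiv.Perm ℝ)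

lemma zmono (hk : StrictMono ⇑k) : ∀ n : ℤ, StrictMono ⇑(k ^ n) := by
  intro n
  cases n with
  | ofNat m =>
      rw [Int.ofNat_eq_natCast, zpow_natCast, Equiv.Perm.coe_pow]
      exact hk.iterate m
  | negSucc m =>
      rw [zpow_negSucc]
      have h1 : StrictMono ⇑(k ^ (m + 1)) := by
        rw [Equiv.Perm.coe_pow]; exact hk.iterate (m + 1)
      have : ((k ^ (m + 1))⁻¹ : Equiv.Perm ℝ) = (k ^ (m + 1)).symm := rfl
      rw [this]
      exact symm_sm _ h1

lemma apply_zpow_succ (n : ℤ) (x : ℝ) : (k ^ (n + 1)) x = (k ^ n) (k x) := by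
  rw [zpow_add_one]; rfl

lemma apply_zpow_succ' (n : ℤ) (x : ℝ) : (k ^ (n + 1)) x = k ((k ^ n) x) := by
  have : k ^ (n + 1) = k * k ^ n := by rw [add_comm, zpow_one_add]
  rw [this]; rfl

lemma aZ_strictMono (hk : StrictMono ⇑k) (hfx : ∀ x, x < k x) : StrictMono (fun n : ℤ => (k ^ n) 0) := by
  apply strictMono_int_of_lt_succ
  intro n
  have := apply_zpow_succ k n 0
  rw [this]
  exact zmono k hk n (hfx 0)

lemma aZ_unbounded_above (hk : StrictMono ⇑k) (hfx : ∀ x, x < k x) : ∀ x : ℝ, ∃ n : ℤ, x < (k ^ n) 0 := by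
  intro x
  by_contra hcon
  push_neg at hcon
  set u : ℕ → ℝ := fun m => (k ^ (m : ℤ)) 0 with hu
  have humono : Monotone u := fun a b hab => ((aZ_strictMono k hk hfx).monotone (by exact_mod_cast hab))
  have hbdd : BddAbove (Set.range u) := ⟨x, by rintro _ ⟨m, rfl⟩; exact hcon m⟩
  have hlim : Tendsto u atTop (nhds (⨆ m, u m)) := tendsto_atTop_ciSup humono hbdd
  have hkc : Continuous ⇑k := cont_of_sm _ hk k.surjective
  have hlim2 : Tendsto (fun m => k (u m)) atTop (nhds (k (⨆ m, u m))) :=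
    (hkc.tendsto _).comp hlim
  have hshift : (fun m => k (u m)) = fun m => u (m + 1) := by
    funext m
    have := apply_zpow_succ' k (m : ℤ) 0
    simp only [hu]
    rw [← this]
    norm_num
  have hlim3 : Tendsto (fun m => u (m + 1)) atTop (nhds (⨆ m, u m)) :=
    hlim.comp (tendsto_add_atTop_nat 1)
  rw [hshift] at hlim2
  have : k (⨆ m, u m) = ⨆ m, u m := tendsto_nhds_unique hlim2 hlim3
  exact absurd this (ne_of_gt (hfx _))

lemma aZ_unbounded_below (hk : StrictMono ⇑k) (hfx : ∀ x, x < k x) : ∀ x : ℝ, ∃ n : ℤ, (k ^ n) 0 < x := by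
  intro x
  by_contra hcon
  push_neg at hcon
  set u : ℕ → ℝ := fun m => (k ^ (-(m : ℤ))) 0 with hu
  have humono : Monotone (fun m => - u m) := by
    intro a b hab
    simp only [neg_le_neg_iff, hu]
    exact (aZ_strictMono k hk hfx).monotone (by omega)
  have hbdd : BddAbove (Set.range (fun m => - u m)) := by
    refine ⟨-x, ?_⟩; rintro _ ⟨m, rfl⟩; simpa using hcon _
  have hlim0 : Tendsto (fun m => - u m) atTop (nhds (⨆ m, - u m)) := tendsto_atTop_ciSup humono hbdd
  set L : ℝ := - ⨆ m, - u m with hL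
  have hlim : Tendsto u atTop (nhds L) := by
    have := hlim0.neg
    simpa [hL] using this
  have hkc : Continuous ⇑k := cont_of_sm _ hk k.surjective
  have hlim2 : Tendsto (fun m => k (u (m + 1))) atTop (nhds (k L)) :=
    (hkc.tendsto _).comp (hlim.comp (tendsto_add_atTop_nat 1))
  have hshift : (fun m => k (u (m + 1))) = fun m => u m := by
    funext m
    simp only [hu]
    have := apply_zpow_succ' k (-(m : ℤ) - 1) 0
    have h2 : (-(m:ℤ) - 1 + 1) = -(m:ℤ) := by ring
    rw [h2] at this
    rw [this]
    congr 2
    push_cast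
    ring
  rw [hshift] at hlim2
  have : k L = L := tendsto_nhds_unique hlim2 hlim
  exact absurd this (ne_of_gt (hfx _))

lemma exists_floor_orbit (hk : StrictMono ⇑k) (hfx : ∀ x, x < k x) (x : ℝ) : ∃ n : ℤ, (k ^ n) 0 ≤ x ∧ x < (k ^ (n + 1)) 0 := by
  obtain ⟨N, hN⟩ := aZ_unbounded_above k hk hfx x
  obtain ⟨M, hM⟩ := aZ_unbounded_below k hk hfx x
  have Hbdd : ∃ b : ℤ, ∀ z : ℤ, (k ^ z) 0 ≤ x → z ≤ b := by
    refine ⟨N, fun z hz => ?_⟩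
    by_contra hzn
    push_neg at hzn
    exact absurd (le_trans ((aZ_strictMono k hk hfx).monotone hzn.le) hz) (not_le.mpr hN)
  obtain ⟨n, hn1, hn2⟩ := Int.exists_greatest_of_bdd Hbdd ⟨M, hM.le⟩
  refine ⟨n, hn1, ?_⟩
  by_contra hcon
  push_neg at hcon
  exact absurd (hn2 _ hcon) (by omega)

noncomputable def phi (t : ℝ) : ℝ := (k ^ ⌊t⌋) (k 0 * Int.fract t)

lemma phi_strictMono (hk : StrictMono ⇑k) (hfx : ∀ x, x < k x) : StrictMono (phi k) := by
  have hc : (0:ℝ) < k 0 := hfx 0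
  intro s t hst
  have hm : ⌊s⌋ ≤ ⌊t⌋ := Int.floor_mono hst.le
  rcases eq_or_lt_of_le hm with heq | hlt
  · have hfr : Int.fract s < Int.fract t := by
      unfold Int.fract; rw [heq]; linarith
    unfold phi
    rw [heq]
    exact zmono k hk ⌊t⌋ (by nlinarith)
  · unfold phi
    have h1 : (k ^ ⌊s⌋) (k 0 * Int.fract s) < (k ^ ⌊s⌋) (k 0) := by
      apply zmono k hk
      nlinarith [Int.fract_lt_one s, Int.fract_nonneg s]
    have h2 : (k ^ ⌊s⌋) (k 0) = (k ^ (⌊s⌋ + 1)) 0 := (apply_zpow_succ k ⌊s⌋ 0).symm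
    have h3 : (k ^ (⌊s⌋ + 1)) 0 ≤ (k ^ ⌊t⌋) 0 :=
      (aZ_strictMono k hk hfx).monotone (by omega)
    have h4 : (k ^ ⌊t⌋) 0 ≤ (k ^ ⌊t⌋) (k 0 * Int.fract t) :=
      (zmono k hk ⌊t⌋).monotone (by nlinarith [Int.fract_nonneg t])
    linarith

lemma phi_surjective (hk : StrictMono ⇑k) (hfx : ∀ x, x < k x) : Surjective (phi k) := by
  have hc : (0:ℝ) < k 0 := hfx 0
  intro x
  obtain ⟨n, hn1, hn2⟩ := exists_floor_orbit k hk hfx x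
  set y : ℝ := (k ^ n)⁻¹ x with hy
  have hky : (k ^ n) y = x := Equiv.apply_symm_apply _ _
  have hy0 : 0 ≤ y := by
    by_contra hcon
    push_neg at hcon
    have := zmono k hk n hcon
    rw [hky] at this
    linarith
  have hyc : y < k 0 := by
    by_contra hcon
    push_neg at hcon
    have h6 := (zmono k hk n).monotone hcon
    rw [hky] at h6
    rw [apply_zpow_succ k n 0] at hn2
    linarith
  refine ⟨y / k 0 + n, ?_⟩
  have hfl : ⌊y / k 0 + (n:ℝ)⌋ = n := by
    rw [Int.floor_add_intCast]
    have : ⌊y / k 0⌋ = 0 := Int.floor_eq_zero_iff.mpr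
      ⟨div_nonneg hy0 hc.le, by rwa [div_lt_one hc]⟩
    omega
  have hfr : Int.fract (y / k 0 + (n:ℝ)) = y / k 0 := by
    rw [Int.fract_add_intCast]
    unfold Int.fract
    have : ⌊y / k 0⌋ = 0 := Int.floor_eq_zero_iff.mpr
      ⟨div_nonneg hy0 hc.le, by rwa [div_lt_one hc]⟩
    rw [this]; simp
  unfold phi
  rw [hfl, hfr]
  rw [mul_div_cancel₀ _ (ne_of_gt hc)]
  exact hky

lemma phi_succ (t : ℝ) : phi k (t + 1) = k (phi k t) := by
  unfold phi
  rw [show t + 1 = t + (1:ℤ) by norm_num, Int.floor_add_intCast, Int.fract_add_intCast]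
  exact apply_zpow_succ' k ⌊t⌋ _

/-- A fixed-point-free increasing homeomorphism is a product of two involutions. -/
lemma fpf_two_involutions (hk : StrictMono ⇑k) (hfx : ∀ x, x < k x) :
    ∃ σ ρ : Equiv.Perm ℝ,
      (IsHomeo σ ∧ σ * σ = 1) ∧ (IsHomeo ρ ∧ ρ * ρ = 1) ∧ k = σ * ρ := by
  set e := StrictMono.orderIsoOfSurjective (phi k) (phi_strictMono k hk hfx)
    (phi_surjective k hk hfx) with he
  set P : Equiv.Perm ℝ := e.toEquiv with hP
  have hPcoe : ⇑P = phi k := rfl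
  have hPm : StrictMono ⇑P := by rw [hPcoe]; exact phi_strictMono k hk hfx
  set ρ₀ : Equiv.Perm ℝ := Function.Involutive.toPerm (fun x : ℝ => 1 - x)
    (fun x => by ring) with hρ₀
  set σ₀ : Equiv.Perm ℝ := Function.Involutive.toPerm (fun x : ℝ => -x)
    neg_involutive with hσ₀
  have hρ₀sq : ρ₀ * ρ₀ = 1 := by
    ext x
    simp only [hρ₀, Function.Involutive.toPerm, Equiv.coe_fn_mk, Equiv.Perm.mul_apply,
      Equiv.Perm.one_apply]
    ring
  have hσ₀sq : σ₀ * σ₀ = 1 := by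
    ext x
    simp only [hσ₀, Function.Involutive.toPerm, Equiv.coe_fn_mk, Equiv.Perm.mul_apply,
      Equiv.Perm.one_apply]
    ring
  have hρ₀a : StrictAnti ⇑ρ₀ := by
    intro a b hab
    simp only [hρ₀, Function.Involutive.toPerm, Equiv.coe_fn_mk]
    linarith
  have hσ₀a : StrictAnti ⇑σ₀ := by
    intro a b hab
    simp only [hσ₀, Function.Involutive.toPerm, Equiv.coe_fn_mk]
    linarith
  refine ⟨P * ρ₀ * P⁻¹, P * σ₀ * P⁻¹, ⟨?_, ?_⟩, ⟨?_, ?_⟩, ?_⟩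
  · exact isHomeo_mul (isHomeo_mul (isHomeo_of_sm P hPm) (isHomeo_of_sa ρ₀ hρ₀a))
      (isHomeo_inv (isHomeo_of_sm P hPm))
  · rw [show (P * ρ₀ * P⁻¹) * (P * ρ₀ * P⁻¹) = P * (ρ₀ * ρ₀) * P⁻¹ by group, hρ₀sq]
    group
  · exact isHomeo_mul (isHomeo_mul (isHomeo_of_sm P hPm) (isHomeo_of_sa σ₀ hσ₀a))
      (isHomeo_inv (isHomeo_of_sm P hPm))
  · rw [show (P * σ₀ * P⁻¹) * (P * σ₀ * P⁻¹) = P * (σ₀ * σ₀) * P⁻¹ by group, hσ₀sq]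
    group
  · rw [show (P * ρ₀ * P⁻¹) * (P * σ₀ * P⁻¹) = P * (ρ₀ * σ₀) * P⁻¹ by group]
    ext x
    simp only [Equiv.Perm.mul_apply]
    have h1 : ρ₀ (σ₀ (P⁻¹ x)) = (P⁻¹ x : ℝ) + 1 := by
      simp [hρ₀, hσ₀, Function.Involutive.toPerm, Equiv.coe_fn_mk]
      ring
    rw [h1]
    have h2 : P ((P⁻¹ x : ℝ) + 1) = k (P (P⁻¹ x)) := by
      rw [hPcoe]  -- both sides coe
      exact phi_succ k _
    rw [show (P : Equiv.Perm ℝ) ((P⁻¹ x : ℝ) + 1) = phi k ((P⁻¹ x : ℝ) + 1) from rfl] at *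
    rw [h2, show P (P⁻¹ x) = x from Equiv.apply_symm_apply P x]

end LemB

/-- Lemma A: a decreasing involution strictly above a given decreasing bijection. -/
lemma involution_above (g : Equiv.Perm ℝ) (hg : StrictAnti ⇑g) :
    ∃ τ : Equiv.Perm ℝ, IsHomeo τ ∧ τ * τ = 1 ∧ StrictAnti ⇑τ ∧ ∀ y, g y < τ y := by
  have hgs : StrictAnti ⇑g.symm := symm_sa g hg
  set p : ℝ := max 1 (max (g 0) (g.symm 0)) with hp
  have hp1 : (1:ℝ) ≤ p := le_max_left _ _
  have hgp : g p ≤ 0 := by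
    have : g.symm 0 ≤ p := le_trans (le_max_right _ _) (le_max_right _ _)
    calc g p ≤ g (g.symm 0) := hg.antitone this
    _ = 0 := g.apply_symm_apply 0
  have hgsp : g.symm p ≤ 0 := by
    have : g 0 ≤ p := le_trans (le_max_left _ _) (le_max_right _ _)
    calc g.symm p ≤ g.symm (g 0) := hgs.antitone this
    _ = 0 := g.symm_apply_apply 0
  set M : ℝ → ℝ := fun y => max (g y) (g.symm y) with hM
  have hMa : StrictAnti M := fun a b hab => max_lt_max (hg hab) (hgs hab)
  set H : ℝ → ℝ := fun y => max (M y + 1) (2 * p - y) with hH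
  have hHa : StrictAnti H := fun a b hab =>
    max_lt_max (by have := hMa hab; linarith) (by linarith)
  have hHc : Continuous H := by
    have h1 : Continuous ⇑g := cont_of_sa _ hg g.surjective
    have h2 : Continuous ⇑g.symm := cont_of_sa _ hgs g.symm.surjective
    exact ((h1.max h2).add continuous_const).max (continuous_const.sub continuous_id)
  have hHsurj : Surjective H := by
    apply hHc.surjective'
    · apply tendsto_atTop_mono (fun y => le_max_right (M y + 1) (2 * p - y))
      apply tendsto_atBot_atTop.mpr
      intro b
      exact ⟨2 * p - b, fun y hy => by linarith⟩
    · apply tendsto_atTop_atBot.mpr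
      intro b
      refine ⟨max (2 * p - b) (max (g.symm (b - 1)) (g (b - 1))), fun y hy => ?_⟩
      have h1 : g y ≤ b - 1 := by
        have : g.symm (b-1) ≤ y := le_trans (le_trans (le_max_left _ _) (le_max_right _ _)) hy
        calc g y ≤ g (g.symm (b-1)) := hg.antitone this
        _ = b - 1 := g.apply_symm_apply _
      have h2 : g.symm y ≤ b - 1 := by
        have : g (b-1) ≤ y := le_trans (le_trans (le_max_right _ _) (le_max_right _ _)) hy
        calc g.symm y ≤ g.symm (g (b-1)) := hgs.antitone this
        _ = b - 1 := g.symm_apply_apply _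
      have h3 : 2 * p - y ≤ b := by
        have : 2 * p - b ≤ y := le_trans (le_max_left _ _) hy
        linarith
      have h4 : M y + 1 ≤ b := by
        simp only [hM]
        rcases max_cases (g y) (g.symm y) with ⟨h, _⟩ | ⟨h, _⟩ <;> rw [h] <;> linarith
      exact max_le h4 h3
  have hHinj : Injective H := hHa.injective
  set Hp : Equiv.Perm ℝ := Equiv.ofBijective H ⟨hHinj, hHsurj⟩ with hHp
  have hHpcoe : ⇑Hp = H := rfl
  have hMp : M p ≤ 0 := max_le hgp hgsp
  have hHfix : H p = p := by
    simp only [hH]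
    have : 2 * p - p = p := by ring
    rw [this]
    exact max_eq_right (by linarith)
  have hHsfix : Hp.symm p = p := by
    conv_lhs => rw [← hHfix]
    exact Hp.symm_apply_apply p
  have hHsa : StrictAnti ⇑Hp.symm := symm_sa Hp (hHpcoe ▸ hHa)
  have hsymm_gt : ∀ y, y < p → p < Hp.symm y := fun y hy => by
    have := hHsa hy
    rwa [hHsfix] at this
  set t : ℝ → ℝ := fun y => if p ≤ y then H y else Hp.symm y with ht
  have hinv : Involutive t := by
    intro y
    by_cases hy : p ≤ y
    · rcases eq_or_lt_of_le hy with heq | hlt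
      · simp only [ht,eq_comm.mp heq ▸ le_refl p]
        rw [← heq, if_pos le_rfl, hHfix, if_pos le_rfl, hHfix]
      · have h1 : H y < p := by
          rw [← hHfix]; exact hHa hlt
        simp only [ht]
        rw [if_pos hy, if_neg (not_le.mpr h1)]
        exact Hp.symm_apply_apply y
    · push_neg at hy
      have h1 : p < Hp.symm y := hsymm_gt y hy
      simp only [ht]
      rw [if_neg (not_le.mpr hy), if_pos h1.le]
      exact Hp.apply_symm_apply y
  have htanti : StrictAnti t := by
    intro a b hab
    simp only [ht]
    by_cases hA : p ≤ a
    · rw [if_pos hA, if_pos (le_trans hA hab.le)]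
      exact hHa hab
    · push_neg at hA
      rw [if_neg (not_le.mpr hA)]
      by_cases hB : p ≤ b
      · rw [if_pos hB]
        have h1 : H b ≤ p := by rw [← hHfix]; exact hHa.antitone hB
        exact lt_of_le_of_lt h1 (hsymm_gt a hA)
      · rw [if_neg hB]
        exact hHsa hab
  set τ : Equiv.Perm ℝ := Function.Involutive.toPerm t hinv with hτ
  have hτcoe : ⇑τ = t := rfl
  refine ⟨τ, isHomeo_of_sa τ (hτcoe ▸ htanti), ?_, hτcoe ▸ htanti, ?_⟩
  · ext x
    simp only [Equiv.Perm.mul_apply, Equiv.Perm.one_apply, hτcoe]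
    exact hinv x
  · intro y
    rw [hτcoe]
    simp only [ht]
    by_cases hy : p ≤ y
    · rw [if_pos hy]
      have h1 : M y + 1 ≤ H y := le_max_left _ _
      have h2 : g y ≤ M y := le_max_left _ _
      linarith
    · push_neg at hy
      rw [if_neg (not_le.mpr hy)]
      by_cases hgy : g y < p
      · exact lt_trans hgy (hsymm_gt y hy)
      · push_neg at hgy
        have h1 : y + 1 ≤ H (g y) := by
          have h2 : g.symm (g y) ≤ M (g y) := le_max_right _ _
          rw [g.symm_apply_apply] at h2
          have h3 : M (g y) + 1 ≤ H (g y) := le_max_left _ _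
          linarith
        have h4 : H (Hp.symm y) < H (g y) := by
          rw [show H (Hp.symm y) = Hp (Hp.symm y) from rfl, Hp.apply_symm_apply]
          linarith
        exact (hHa.lt_iff_gt.mp h4)

/-- Part 1: decreasing homeo is a product of three involutions. -/
lemma part1 (f : Equiv.Perm ℝ) (hf : IsHomeo f) (hfa : StrictAnti ⇑f) :
    ∃ τ₁ τ₂ τ₃ : Equiv.Perm ℝ,
      (IsHomeo τ₁ ∧ τ₁ * τ₁ = 1) ∧ (IsHomeo τ₂ ∧ τ₂ * τ₂ = 1) ∧
      (IsHomeo τ₃ ∧ τ₃ * τ₃ = 1) ∧ f = τ₁ * τ₂ * τ₃ := by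
  obtain ⟨τ, hτh, hτsq, hτa, hτab⟩ := involution_above f.symm (symm_sa f hfa)
  set k : Equiv.Perm ℝ := τ * f with hk
  have hkm : StrictMono ⇑k := by
    intro a b hab
    exact hτa (hfa hab)
  have hkfx : ∀ x, x < k x := by
    intro x
    have := hτab (f x)
    rwa [f.symm_apply_apply] at this
  obtain ⟨σ, ρ, hσ, hρ, hkeq⟩ := fpf_two_involutions k hkm hkfx
  refine ⟨τ, σ, ρ, ⟨hτh, hτsq⟩, hσ, hρ, ?_⟩
  have hτinv : τ⁻¹ = τ := mul_eq_one_iff_inv_eq.mp hτsq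
  have : f = τ⁻¹ * k := by rw [hk]; group
  rw [this, hτinv, hkeq, ← mul_assoc]

/-- An increasing homeo, below the diagonal case. -/
lemma fpf_below (b : Equiv.Perm ℝ) (hb : StrictMono ⇑b) (hfx : ∀ x, b x < x) :
    ∃ σ ρ : Equiv.Perm ℝ,
      (IsHomeo σ ∧ σ * σ = 1) ∧ (IsHomeo ρ ∧ ρ * ρ = 1) ∧ b = σ * ρ := by
  have h1 : StrictMono ⇑b⁻¹ := symm_sm b hb
  have h2 : ∀ x, x < b⁻¹ x := by
    intro x
    have := hfx (b⁻¹ x)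
    rwa [show b (b⁻¹ x) = x from b.apply_symm_apply x] at this
  obtain ⟨σ, ρ, ⟨hσh, hσsq⟩, ⟨hρh, hρsq⟩, heq⟩ := fpf_two_involutions b⁻¹ h1 h2
  refine ⟨ρ, σ, ⟨hρh, hρsq⟩, ⟨hσh, hσsq⟩, ?_⟩
  have hσinv : σ⁻¹ = σ := mul_eq_one_iff_inv_eq.mp hσsq
  have hρinv : ρ⁻¹ = ρ := mul_eq_one_iff_inv_eq.mp hρsq
  have : b = (σ * ρ)⁻¹ := by rw [← heq]; group
  rw [this, mul_inv_rev, hσinv, hρinv]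

/-- Part 2, increasing case: product of four involutions. -/
lemma part2_mono (f : Equiv.Perm ℝ) (hf : IsHomeo f) (hfm : StrictMono ⇑f) :
    ∃ τ₁ τ₂ τ₃ τ₄ : Equiv.Perm ℝ,
      (IsHomeo τ₁ ∧ τ₁ * τ₁ = 1) ∧ (IsHomeo τ₂ ∧ τ₂ * τ₂ = 1) ∧
      (IsHomeo τ₃ ∧ τ₃ * τ₃ = 1) ∧ (IsHomeo τ₄ ∧ τ₄ * τ₄ = 1) ∧
      f = τ₁ * τ₂ * τ₃ * τ₄ := by
  set A : ℝ → ℝ := fun x => max x (f x) + 1 with hA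
  have hAm : StrictMono A := fun a b hab => by
    have := max_lt_max hab (hfm hab)
    simpa [hA] using this
  have hAsurj : Surjective A := by
    apply Continuous.surjective
    · exact (continuous_id.max hf.1).add continuous_const
    · apply tendsto_atTop_mono (fun x => ?_) tendsto_id
      have : (x:ℝ) ≤ max x (f x) := le_max_left _ _
      simp only [hA, id_eq]
      linarith
    · apply tendsto_atBot_atBot.mpr
      intro bb
      refine ⟨min (bb - 1) (f.symm (bb - 1)), fun x hx => ?_⟩
      have h1 : x ≤ bb - 1 := le_trans hx (min_le_left _ _)
      have h2 : f x ≤ bb - 1 := by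
        have : x ≤ f.symm (bb - 1) := le_trans hx (min_le_right _ _)
        calc f x ≤ f (f.symm (bb-1)) := hfm.monotone this
        _ = bb - 1 := f.apply_symm_apply _
      simp only [hA]
      rcases max_cases x (f x) with ⟨h, _⟩ | ⟨h, _⟩ <;> rw [h] <;> linarith
  set aP : Equiv.Perm ℝ := Equiv.ofBijective A ⟨hAm.injective, hAsurj⟩ with haP
  have haPcoe : ⇑aP = A := rfl
  have haPm : StrictMono ⇑aP := haPcoe ▸ hAm
  have haPfx : ∀ x, x < aP x := fun x => by
    rw [haPcoe]
    have : (x:ℝ) ≤ max x (f x) := le_max_left _ _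
    simp only [hA]; linarith
  have haPf : ∀ x, f x < aP x := fun x => by
    rw [haPcoe]
    have : (f x:ℝ) ≤ max x (f x) := le_max_right _ _
    simp only [hA]; linarith
  set b : Equiv.Perm ℝ := aP⁻¹ * f with hb
  have hbm : StrictMono ⇑b := fun x y hxy => by
    simp only [hb, Equiv.Perm.mul_apply]
    exact symm_sm aP haPm (hfm hxy)
  have hbfx : ∀ x, b x < x := fun x => by
    simp only [hb, Equiv.Perm.mul_apply]
    have := haPf x
    have h2 := haPm.lt_iff_lt (a := (aP⁻¹ : Equiv.Perm ℝ) (f x)) (b := x)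
    rw [show aP ((aP⁻¹ : Equiv.Perm ℝ) (f x)) = f x from aP.apply_symm_apply _] at h2
    exact h2.mp this
  obtain ⟨σ₁, ρ₁, hσ₁, hρ₁, heq₁⟩ := fpf_two_involutions aP haPm haPfx
  obtain ⟨ρ₂, σ₂, hρ₂, hσ₂, heq₂⟩ := fpf_below b hbm hbfx
  refine ⟨σ₁, ρ₁, ρ₂, σ₂, hσ₁, hρ₁, hρ₂, hσ₂, ?_⟩
  have : f = aP * b := by rw [hb]; group
  rw [this, heq₁, heq₂]
  group

theorem stmt_9' :
    (∀ f : Equiv.Perm ℝ, IsHomeo f → StrictAnti (⇑f) →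
      ∃ τ₁ τ₂ τ₃ : Equiv.Perm ℝ,
        (IsHomeo τ₁ ∧ τ₁ * τ₁ = 1) ∧ (IsHomeo τ₂ ∧ τ₂ * τ₂ = 1) ∧
        (IsHomeo τ₃ ∧ τ₃ * τ₃ = 1) ∧ f = τ₁ * τ₂ * τ₃) ∧
    (∀ f : Equiv.Perm ℝ, IsHomeo f →
      ∃ τ₁ τ₂ τ₃ τ₄ : Equiv.Perm ℝ,
        (IsHomeo τ₁ ∧ τ₁ * τ₁ = 1) ∧ (IsHomeo τ₂ ∧ τ₂ * τ₂ = 1) ∧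
        (IsHomeo τ₃ ∧ τ₃ * τ₃ = 1) ∧ (IsHomeo τ₄ ∧ τ₄ * τ₄ = 1) ∧
        f = τ₁ * τ₂ * τ₃ * τ₄) := by
  constructor
  · exact part1
  · intro f hf
    rcases Continuous.strictMono_of_inj hf.1 f.injective with hm | ha
    · exact part2_mono f hf hm
    · obtain ⟨τ₁, τ₂, τ₃, h₁, h₂, h₃, heq⟩ := part1 f hf ha
      exact ⟨τ₁, τ₂, τ₃, 1, h₁, h₂, h₃, ⟨isHomeo_one, one_mul 1⟩, by rw [mul_one]; exact heq⟩
end Stmt9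

/-- H⁻(ℝ) ⊆ I₃(H(ℝ)) and H(ℝ) = I₄(H(ℝ)). -/
theorem stmt_9 :
    (∀ f : Equiv.Perm ℝ, IsHomeo f → StrictAnti (⇑f) →
      ∃ τ₁ τ₂ τ₃ : Equiv.Perm ℝ,
        (IsHomeo τ₁ ∧ τ₁ * τ₁ = 1) ∧ (IsHomeo τ₂ ∧ τ₂ * τ₂ = 1) ∧
        (IsHomeo τ₃ ∧ τ₃ * τ₃ = 1) ∧ f = τ₁ * τ₂ * τ₃) ∧
    (∀ f : Equiv.Perm ℝ, IsHomeo f →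
      ∃ τ₁ τ₂ τ₃ τ₄ : Equiv.Perm ℝ,
        (IsHomeo τ₁ ∧ τ₁ * τ₁ = 1) ∧ (IsHomeo τ₂ ∧ τ₂ * τ₂ = 1) ∧
        (IsHomeo τ₃ ∧ τ₃ * τ₃ = 1) ∧ (IsHomeo τ₄ ∧ τ₄ * τ₄ = 1) ∧
        f = τ₁ * τ₂ * τ₃ * τ₄) := Stmt9.stmt_9'
end
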